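/- arXiv:2101.12566 — 3 statements merged into one kernel-verified Lean document; each statement's English description precedes it below -/
import Mathlib

section
/- There exists a universal constant C > 0 such that for all L > 0 and all L²-normalized ψ ∈ H¹(𝕋³_L), W_L(ψ) ≤ C·L·T_L(ψ), where T_L(ψ) = ∫|∇ψ|² and W_L(ψ) = Σ_{0≠k} |k|^{-2}|(ρ_ψ)_k|² with ρ_ψ = |ψ|². Consequently, E_L(ψ) = T_L(ψ) − W_L(ψ) ≥ (1 − CL)T_L(ψ), so for L < 1/C the Pekar functional E_L is strictly positive on every non-constant normalized ψ and is minimized by the constant function with minimum value 0. -/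
open scoped Real BigOperators

abbrev Lat3 := Fin 3 → ℤ

noncomputable def nu (k : Lat3) : ℝ := Real.sqrt (∑ i, ((k i : ℝ)) ^ 2)

lemma nu_nonneg (k : Lat3) : 0 ≤ nu k := Real.sqrt_nonneg _

lemma sum_sq_nonneg (k : Lat3) : 0 ≤ ∑ i, ((k i : ℝ)) ^ 2 :=
  Finset.sum_nonneg fun _ _ => sq_nonneg _

lemma nu_sq (k : Lat3) : nu k ^ 2 = ∑ i, ((k i : ℝ)) ^ 2 :=
  Real.sq_sqrt (sum_sq_nonneg k)

lemma nu_pos {k : Lat3} (hk : k ≠ 0) : 0 < nu k := by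
  apply Real.sqrt_pos.mpr
  have : ∃ i, k i ≠ 0 := by
    by_contra h
    push_neg at h
    exact hk (funext h)
  obtain ⟨i, hi⟩ := this
  have h1 : (0:ℝ) < ((k i : ℝ)) ^ 2 := by
    have : ((k i : ℝ)) ≠ 0 := Int.cast_ne_zero.mpr hi
    positivity
  calc (0:ℝ) < ((k i : ℝ))^2 := h1
    _ ≤ ∑ j, ((k j : ℝ))^2 :=
      Finset.single_le_sum (f := fun j => ((k j : ℝ))^2) (fun j _ => sq_nonneg _)
        (Finset.mem_univ i)

lemma nu_eq_norm (k : Lat3) :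
    nu k = ‖(WithLp.equiv 2 (Fin 3 → ℝ)).symm (fun i => (k i : ℝ))‖ := by
  rw [EuclideanSpace.norm_eq]
  unfold nu
  congr 1
  refine Finset.sum_congr rfl fun i _ => ?_
  rw [Real.norm_eq_abs, sq_abs]
  rfl

lemma nu_triangle (a b : Lat3) : nu (a + b) ≤ nu a + nu b := by
  rw [nu_eq_norm, nu_eq_norm, nu_eq_norm]
  have : (WithLp.equiv 2 (Fin 3 → ℝ)).symm (fun i => ((a + b) i : ℝ))
      = (WithLp.equiv 2 (Fin 3 → ℝ)).symm (fun i => (a i : ℝ))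
        + (WithLp.equiv 2 (Fin 3 → ℝ)).symm (fun i => (b i : ℝ)) := by
    ext i
    simp [WithLp.equiv]
  rw [this]
  exact norm_add_le _ _

lemma nu_neg (a : Lat3) : nu (-a) = nu a := by
  unfold nu
  congr 1
  refine Finset.sum_congr rfl fun i _ => ?_
  have : ((-a) i : ℝ) = -(a i : ℝ) := by simp
  rw [this]
  ring

noncomputable def gfun (k : Lat3) : ℝ := if k = 0 then 0 else (nu k ^ 4)⁻¹

lemma gfun_nonneg (k : Lat3) : 0 ≤ gfun k := by
  unfold gfun
  split
  · exact le_rfl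
  · positivity

lemma norm_sq_le {x : Fin 2 → ℤ} : (‖x‖:ℝ) ^ 2 ≤ ((x 0 : ℝ))^2 + ((x 1 : ℝ))^2 := by
  rw [EisensteinSeries.norm_eq_max_natAbs]
  rcases le_total (x 0).natAbs (x 1).natAbs with h | h
  · rw [max_eq_right h]
    have : (((x 1).natAbs : ℝ))^2 = ((x 1 : ℝ))^2 := by
      rw [Nat.cast_natAbs]
      push_cast
      rw [sq_abs]
    rw [this]
    nlinarith [sq_nonneg ((x 0 : ℝ))]
  · rw [max_eq_left h]
    have : (((x 0).natAbs : ℝ))^2 = ((x 0 : ℝ))^2 := by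
      rw [Nat.cast_natAbs]
      push_cast
      rw [sq_abs]
    rw [this]
    nlinarith [sq_nonneg ((x 1 : ℝ))]

lemma one_le_norm {x : Fin 2 → ℤ} (hx : x ≠ 0) : (1:ℝ) ≤ ‖x‖ := by
  rw [EisensteinSeries.norm_eq_max_natAbs]
  have : 1 ≤ max (x 0).natAbs (x 1).natAbs := by
    by_contra h
    push_neg at h
    interval_cases h1 : max (x 0).natAbs (x 1).natAbs
    · apply hx
      have h0 : (x 0).natAbs = 0 := by omega
      have h1' : (x 1).natAbs = 0 := by
        have := le_max_right (x 0).natAbs (x 1).natAbs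
        omega
      funext i
      fin_cases i
      · exact Int.natAbs_eq_zero.mp h0
      · exact Int.natAbs_eq_zero.mp h1'
  exact_mod_cast this

set_option maxHeartbeats 1000000 in
lemma summable_gfun : Summable gfun := by
  set h : ℤ → ℝ := fun c => (((c:ℝ)) ^ 4)⁻¹ with hh_def
  set w : ℤ → ℝ := fun c => (1 + ((c:ℝ)) ^ 2) ^ (-(3/4) : ℝ) with hw_def
  set f : (Fin 2 → ℤ) → ℝ := fun x => ‖x‖ ^ (-(5/2) : ℝ) with hf_def
  set ind : (Fin 2 → ℤ) → ℝ := fun x => if x = 0 then (1:ℝ) else 0 with hind_def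
  set indZ : ℤ → ℝ := fun c => if c = 0 then (1:ℝ) else 0 with hindZ_def
  have hh : Summable h := by
    have := (Real.summable_one_div_int_pow (p := 4)).mpr (by norm_num)
    exact this.congr fun c => by simp [h, one_div]
  have hind : Summable ind := by
    apply summable_of_ne_finset_zero (s := {0})
    intro x hx
    simp only [Finset.mem_singleton] at hx
    simp [ind, hx]
  have hindZ : Summable indZ := by
    apply summable_of_ne_finset_zero (s := {0})
    intro x hx
    simp only [Finset.mem_singleton] at hx
    simp [indZ, hx]
  have hw : Summable w := by
    refine Summable.of_nonneg_of_le (fun c => by positivity)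
      (fun c => ?_) ((Real.summable_abs_int_rpow (by norm_num : (1:ℝ) < 3/2)).add hindZ)
    by_cases hc : c = 0
    · subst hc
      simp only [w, indZ, Int.cast_zero, if_pos rfl]
      norm_num
    · have h1 : |((c:ℝ))| ^ (-(3/2) : ℝ) = (((c:ℝ))^2) ^ (-(3/4) : ℝ) := by
        rw [← sq_abs, ← Real.rpow_natCast |((c:ℝ))| 2, ← Real.rpow_mul (abs_nonneg _)]
        norm_num
      have h2 : (1 + ((c:ℝ))^2) ^ (-(3/4):ℝ) ≤ (((c:ℝ))^2) ^ (-(3/4):ℝ) := by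
        apply Real.rpow_le_rpow_of_nonpos
        · have : ((c:ℝ)) ≠ 0 := Int.cast_ne_zero.mpr hc
          positivity
        · linarith [sq_nonneg ((c:ℝ))]
        · norm_num
      have h3 : indZ c = 0 := by simp [indZ, hc]
      calc w c ≤ (((c:ℝ))^2) ^ (-(3/4):ℝ) := h2
        _ = |((c:ℝ))| ^ (-(3/2):ℝ) := h1.symm
        _ ≤ |((c:ℝ))| ^ (-(3/2):ℝ) + indZ c := by rw [h3, add_zero]
  have hf : Summable f :=
    EisensteinSeries.summable_one_div_norm_rpow (by norm_num : (2:ℝ) < 5/2)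
  have hwn : ∀ c, 0 ≤ w c := fun c => by positivity
  have hfn : ∀ x, 0 ≤ f x := fun x => Real.rpow_nonneg (norm_nonneg _) _
  have hhn : ∀ c, 0 ≤ h c := fun c => by positivity
  have hindn : ∀ x, 0 ≤ ind x := fun x => by
    simp only [ind]; split <;> norm_num
  set G : ℤ × (Fin 2 → ℤ) → ℝ :=
    fun p => h p.1 * ind p.2 + w p.1 * f p.2 with hG_def
  have hG : Summable G :=
    (hh.mul_of_nonneg hind hhn hindn).add (hw.mul_of_nonneg hf hwn hfn)
  set e : Lat3 ≃ ℤ × (Fin 2 → ℤ) := (Fin.consEquiv (fun _ : Fin 3 => ℤ)).symm with he_def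
  have key : ∀ k : Lat3, gfun k ≤ G (e k) := by
    intro k
    have hGn : 0 ≤ G (e k) :=
      add_nonneg (mul_nonneg (hhn _) (hindn _)) (mul_nonneg (hwn _) (hfn _))
    by_cases hk : k = 0
    · simpa [gfun, hk] using hGn
    · have hgf : gfun k = (nu k ^ 4)⁻¹ := by simp [gfun, hk]
      have hek1 : (e k).1 = k 0 := rfl
      have hek2 : (e k).2 = fun i : Fin 2 => k i.succ := rfl
      set x : Fin 2 → ℤ := fun i : Fin 2 => k i.succ with hx_def
      have hx0 : (x 0 : ℝ) = ((k 1 : ℤ) : ℝ) := by norm_num [x]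
      have hx1 : (x 1 : ℝ) = ((k 2 : ℤ) : ℝ) := by norm_num [x]
      have hnu4 : nu k ^ 4 =
          (((k 0 : ℝ))^2 + (((k 1 : ℝ))^2 + ((k 2 : ℝ))^2))^2 := by
        have : nu k ^ 4 = (nu k ^ 2)^2 := by ring
        rw [this, nu_sq, Fin.sum_univ_three]
        ring_nf
      by_cases hxz : x = 0
      · -- k 1 = k 2 = 0, so k 0 ≠ 0
        have hk1 : k 1 = 0 := by
          have := congrFun hxz (0 : Fin 2)
          simpa [x] using this
        have hk2 : k 2 = 0 := by
          have := congrFun hxz (1 : Fin 2)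
          simpa [x] using this
        have hk0 : k 0 ≠ 0 := by
          intro h0
          apply hk
          funext i
          fin_cases i <;> assumption
        have hnu : nu k ^ 4 = ((k 0 : ℝ))^4 := by
          rw [hnu4, hk1, hk2]
          push_cast
          ring
        have hfz : f x = 0 := by
          rw [hxz]
          simp only [hf_def]
          rw [norm_zero, Real.zero_rpow (by norm_num)]
        have hiz : ind x = 1 := by
          rw [hxz]
          simp [hind_def]
        rw [hgf, hnu, hG_def]
        simp only [hek1, hek2, hfz, hiz, mul_one, mul_zero, add_zero]
        exact le_refl _
      · -- main case
        have hiz : ind x = 0 := by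
          simp [hind_def, hxz]
        set c : ℝ := ((k 0 : ℤ) : ℝ) with hc_def
        set s : ℝ := ((k 1 : ℝ))^2 + ((k 2 : ℝ))^2 with hs_def
        have hxle : (‖x‖:ℝ)^2 ≤ s := by
          have := norm_sq_le (x := x)
          rwa [hx0, hx1] at this
        have hx1le : (1:ℝ) ≤ ‖x‖ := one_le_norm hxz
        have hs1 : (1:ℝ) ≤ s := by nlinarith
        have hA : (0:ℝ) < c^2 + s := by nlinarith [sq_nonneg c]
        have hnormpos : (0:ℝ) < ‖x‖ := by linarith
        have step1 : (1 + c^2) ^ ((3:ℝ)/4) * ‖x‖ ^ ((5:ℝ)/2) ≤ (c^2 + s)^2 := by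
          have e1 : (c^2+s) ^ ((3:ℝ)/4) * (c^2+s) ^ ((5:ℝ)/4) = (c^2+s)^2 := by
            rw [← Real.rpow_add hA, show (3:ℝ)/4 + 5/4 = ((2:ℕ):ℝ) by norm_num,
              Real.rpow_natCast]
          have e2 : (1 + c^2) ^ ((3:ℝ)/4) ≤ (c^2+s) ^ ((3:ℝ)/4) := by
            apply Real.rpow_le_rpow (by positivity) (by linarith) (by norm_num)
          have e3 : ‖x‖ ^ ((5:ℝ)/2) ≤ (c^2+s) ^ ((5:ℝ)/4) := by
            have : ‖x‖ ^ ((5:ℝ)/2) = ((‖x‖:ℝ)^2) ^ ((5:ℝ)/4) := by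
              rw [← Real.rpow_natCast ‖x‖ 2, ← Real.rpow_mul (norm_nonneg _)]
              norm_num
            rw [this]
            apply Real.rpow_le_rpow (by positivity) (by nlinarith [sq_nonneg c]) (by norm_num)
          calc (1 + c^2) ^ ((3:ℝ)/4) * ‖x‖ ^ ((5:ℝ)/2)
              ≤ (c^2+s) ^ ((3:ℝ)/4) * (c^2+s) ^ ((5:ℝ)/4) := by
                apply mul_le_mul e2 e3 (by positivity) (by positivity)
            _ = (c^2+s)^2 := e1
        have hWpos : (0:ℝ) < (1 + c^2) ^ ((3:ℝ)/4) * ‖x‖ ^ ((5:ℝ)/2) := by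
          apply mul_pos (Real.rpow_pos_of_pos (by positivity) _)
            (Real.rpow_pos_of_pos hnormpos _)
        have hinv : ((c^2 + s)^2)⁻¹ ≤
            ((1 + c^2) ^ ((3:ℝ)/4) * ‖x‖ ^ ((5:ℝ)/2))⁻¹ :=
          inv_anti₀ hWpos step1
        have hsplit : ((1 + c^2) ^ ((3:ℝ)/4) * ‖x‖ ^ ((5:ℝ)/2))⁻¹
            = w (k 0) * f x := by
          rw [mul_inv]
          simp only [hw_def, hf_def]
          rw [← Real.rpow_neg (by positivity : (0:ℝ) ≤ 1 + c^2),
            ← Real.rpow_neg (norm_nonneg _)]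
          all_goals norm_num [hc_def]
        rw [hgf, hnu4]
        have : (((k 0 : ℝ))^2 + (((k 1 : ℝ))^2 + ((k 2 : ℝ))^2)) = c^2 + s := rfl
        rw [this, hG_def]
        simp only [hek1, hek2, hiz, mul_zero, zero_add]
        calc ((c^2+s)^2)⁻¹ ≤ ((1 + c^2) ^ ((3:ℝ)/4) * ‖x‖ ^ ((5:ℝ)/2))⁻¹ := hinv
          _ = w (k 0) * f x := hsplit
  exact Summable.of_nonneg_of_le gfun_nonneg key (e.summable_iff.mpr hG)

lemma cs2 {ι : Type*} {a b : ι → ℝ} (ha : ∀ j, 0 ≤ a j) (hb : ∀ j, 0 ≤ b j)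
    (hA : Summable fun j => a j ^ 2) (hB : Summable fun j => b j ^ 2) :
    Summable (fun j => a j * b j) ∧
      ∑' j, a j * b j ≤ Real.sqrt (∑' j, a j ^ 2) * Real.sqrt (∑' j, b j ^ 2) := by
  have hpq : Real.HolderConjugate 2 2 := Real.HolderConjugate.two_two
  have h2 : ∀ (c : ι → ℝ), (fun j => c j ^ (2:ℝ)) = fun j => c j ^ 2 := by
    intro c
    funext j
    rw [show ((2:ℝ) = ((2:ℕ):ℝ)) by norm_num, Real.rpow_natCast]
  have hA' : Summable fun j => a j ^ (2:ℝ) := by rw [h2]; exact hA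
  have hB' : Summable fun j => b j ^ (2:ℝ) := by rw [h2]; exact hB
  obtain ⟨hs, hle⟩ := Real.summable_and_inner_le_Lp_mul_Lq_tsum_of_nonneg hpq ha hb hA' hB'
  refine ⟨hs, ?_⟩
  have e1 : (∑' j, a j ^ (2:ℝ)) = ∑' j, a j ^ 2 := by rw [h2]
  have e2 : (∑' j, b j ^ (2:ℝ)) = ∑' j, b j ^ 2 := by rw [h2]
  rw [e1, e2] at hle
  have s1 : (∑' j, a j ^ 2) ^ ((1:ℝ)/2) = Real.sqrt (∑' j, a j ^ 2) := by
    rw [Real.sqrt_eq_rpow]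
  have s2 : (∑' j, b j ^ 2) ^ ((1:ℝ)/2) = Real.sqrt (∑' j, b j ^ 2) := by
    rw [Real.sqrt_eq_rpow]
  rw [s1, s2] at hle
  exact hle

noncomputable def knorm (L : ℝ) (k : Lat3) : ℝ :=
  (2 * Real.pi / L) * Real.sqrt (∑ i, ((k i : ℝ)) ^ 2)

/-- Fourier coefficients of `ρ_ψ = |ψ|²`. -/
noncomputable def rhoCoef (L : ℝ) (ψ : Lat3 → ℂ) (k : Lat3) : ℂ :=
  ((L ^ (-(3:ℝ)/2) : ℝ) : ℂ) * ∑' j : Lat3, (starRingEnd ℂ) (ψ j) * ψ (j + k)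

/-- Kinetic energy `T_L(ψ) = ∫|∇ψ|² = Σ_k |k|²|ψ_k|²` (Parseval). -/
noncomputable def TL (L : ℝ) (ψ : Lat3 → ℂ) : ℝ :=
  ∑' k : Lat3, knorm L k ^ 2 * ‖ψ k‖ ^ 2

/-- Interaction energy `W_L(ψ) = Σ_{0≠k} |k|^{-2}|(ρ_ψ)_k|²`. -/
noncomputable def WL (L : ℝ) (ψ : Lat3 → ℂ) : ℝ :=
  ∑' k : Lat3, if k = 0 then 0 else ‖rhoCoef L ψ k‖ ^ 2 / knorm L k ^ 2

/-- The torus Pekar functional `E_L = T_L − W_L`. -/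
noncomputable def EL (L : ℝ) (ψ : Lat3 → ℂ) : ℝ := TL L ψ - WL L ψ

/-- The constant (normalized) function on `𝕋³_L`, in Fourier representation. -/
noncomputable def constFn : Lat3 → ℂ := fun j => if j = 0 then 1 else 0

lemma knorm_eq (L : ℝ) (k : Lat3) : knorm L k = (2 * Real.pi / L) * nu k := rfl

lemma knorm_pos {L : ℝ} (hL : 0 < L) {k : Lat3} (hk : k ≠ 0) : 0 < knorm L k := by
  rw [knorm_eq]
  have := Real.pi_pos
  exact mul_pos (by positivity) (nu_pos hk)

lemma EL_constFn (L : ℝ) : EL L constFn = 0 := by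
  have hT : TL L constFn = 0 := by
    unfold TL
    rw [show (fun k : Lat3 => knorm L k ^ 2 * ‖constFn k‖ ^ 2) = fun _ => (0:ℝ) from ?_, tsum_zero]
    funext k
    by_cases hk : k = 0
    · subst hk
      have : knorm L 0 = 0 := by
        unfold knorm
        simp
      rw [this]
      ring
    · have : constFn k = 0 := by simp [constFn, hk]
      rw [this]
      simp
  have hW : WL L constFn = 0 := by
    unfold WL
    rw [show (fun k : Lat3 => if k = 0 then (0:ℝ) else ‖rhoCoef L constFn k‖ ^ 2 / knorm L k ^ 2)
        = fun _ => (0:ℝ) from ?_, tsum_zero]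
    funext k
    by_cases hk : k = 0
    · simp [hk]
    · rw [if_neg hk]
      have hrho : rhoCoef L constFn k = 0 := by
        unfold rhoCoef
        rw [show (fun j : Lat3 => (starRingEnd ℂ) (constFn j) * constFn (j + k))
            = fun _ => (0:ℂ) from ?_, tsum_zero, mul_zero]
        funext j
        by_cases hj : j = 0
        · subst hj
          have : constFn (0 + k) = 0 := by
            rw [zero_add]
            simp [constFn, hk]
          rw [this, mul_zero]
        · have : constFn j = 0 := by simp [constFn, hj]
          rw [this, map_zero, zero_mul]
      rw [hrho, norm_zero]
      norm_num
  unfold EL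
  rw [hT, hW, sub_zero]

lemma shift_summable {c : Lat3 → ℝ} (hc : Summable c) (k : Lat3) :
    Summable fun j => c (j + k) :=
  ((Equiv.addRight k).summable_iff (f := c)).mpr hc

lemma shift_tsum (c : Lat3 → ℝ) (k : Lat3) : ∑' j, c (j + k) = ∑' j, c j :=
  (Equiv.addRight k).tsum_eq c

set_option maxHeartbeats 1000000 in
lemma key_bound {L : ℝ} (hL : 0 < L) (ψ : Lat3 → ℂ)
    (hsum : Summable (fun j : Lat3 => ‖ψ j‖ ^ 2))
    (hnorm : (∑' j : Lat3, ‖ψ j‖ ^ 2) = 1)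
    (hT : Summable (fun k : Lat3 => knorm L k ^ 2 * ‖ψ k‖ ^ 2))
    (hWsum : Summable (fun k : Lat3 =>
      if k = 0 then (0:ℝ) else ‖rhoCoef L ψ k‖ ^ 2 / knorm L k ^ 2)) :
    WL L ψ ≤ ((∑' k, gfun k) / (4 * Real.pi ^ 4)) * L * TL L ψ := by
  have hπ : 0 < Real.pi := Real.pi_pos
  have hLne : L ≠ 0 := ne_of_gt hL
  have hπne : Real.pi ≠ 0 := ne_of_gt hπ
  set a : Lat3 → ℝ := fun j => ‖ψ j‖ with ha_def
  have han : ∀ j, 0 ≤ a j := fun j => norm_nonneg _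
  have hA : Summable fun j => a j ^ 2 := hsum
  -- kinetic pieces
  have hq : Summable fun j => nu j ^ 2 * a j ^ 2 := by
    have h1 : ∀ j : Lat3, nu j ^ 2 * a j ^ 2
        = (L / (2 * Real.pi)) ^ 2 * (knorm L j ^ 2 * ‖ψ j‖ ^ 2) := by
      intro j
      have haj : a j = ‖ψ j‖ := rfl
      rw [haj, knorm_eq]
      field_simp
    exact (hT.mul_left ((L / (2 * Real.pi)) ^ 2)).congr fun j => (h1 j).symm
  set T' : ℝ := ∑' j, nu j ^ 2 * a j ^ 2 with hT'_def
  have hT'_nonneg : 0 ≤ T' := tsum_nonneg fun j => by positivity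
  have hTL_eq : TL L ψ = (2 * Real.pi / L) ^ 2 * T' := by
    unfold TL
    rw [← tsum_mul_left]
    refine tsum_congr fun j => ?_
    rw [knorm_eq]
    ring
  have hQ : Summable fun j => (nu j * a j) ^ 2 :=
    hq.congr fun j => by ring
  have hQsum : ∑' j, (nu j * a j) ^ 2 = T' := by
    rw [hT'_def]
    exact tsum_congr fun j => by ring
  -- per-k bound
  have main : ∀ k : Lat3, k ≠ 0 →
      ‖rhoCoef L ψ k‖ ^ 2 / knorm L k ^ 2
        ≤ (L * TL L ψ / (4 * Real.pi ^ 4)) * gfun k := by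
    intro k hk
    have hν : 0 < nu k := nu_pos hk
    set b : Lat3 → ℝ := fun j => a (j + k) with hb_def
    have hbn : ∀ j, 0 ≤ b j := fun j => han _
    have hB : Summable fun j => b j ^ 2 := shift_summable hA k
    have hBsum : ∑' j, b j ^ 2 = 1 := by
      rw [hb_def]
      calc ∑' j, a (j + k) ^ 2 = ∑' j, a j ^ 2 :=
            shift_tsum (fun j => a j ^ 2) k
        _ = 1 := hnorm
    obtain ⟨hPsum, _⟩ := cs2 han hbn hA hB
    set P : ℝ := ∑' j, a j * b j with hP_def
    -- step 1 : ‖∑ conj ψ_j ψ_{j+k}‖ ≤ P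
    have hnorm_eq : ∀ j : Lat3, ‖(starRingEnd ℂ) (ψ j) * ψ (j + k)‖ = a j * b j := by
      intro j
      rw [norm_mul, RCLike.norm_conj]
    have step1 : ‖∑' j : Lat3, (starRingEnd ℂ) (ψ j) * ψ (j + k)‖ ≤ P := by
      calc ‖∑' j : Lat3, (starRingEnd ℂ) (ψ j) * ψ (j + k)‖
          ≤ ∑' j : Lat3, ‖(starRingEnd ℂ) (ψ j) * ψ (j + k)‖ :=
            norm_tsum_le_tsum_norm (by
              exact hPsum.congr fun j => (hnorm_eq j).symm)
        _ = P := tsum_congr hnorm_eq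
    -- step 2 : nu k * P ≤ 2 √T'
    have hB2 : Summable fun j => (nu (j + k) * b j) ^ 2 := by
      have := shift_summable hQ k
      exact this.congr fun j => by rw [hb_def]
    have hB2sum : ∑' j, (nu (j + k) * b j) ^ 2 = T' := by
      have h1 : ∑' j, (nu (j + k) * b j) ^ 2 = ∑' j, (nu (j + k) * a (j + k)) ^ 2 := by
        exact tsum_congr fun j => by rw [hb_def]
      rw [h1, shift_tsum (fun j => (nu j * a j) ^ 2) k, hQsum]
    obtain ⟨hS1, hS1le⟩ := cs2 (fun j => mul_nonneg (nu_nonneg j) (han j)) hbn hQ hB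
    obtain ⟨hS2, hS2le⟩ := cs2 han (fun j => mul_nonneg (nu_nonneg _) (hbn j)) hA hB2
    have step2 : nu k * P ≤ 2 * Real.sqrt T' := by
      have pointwise : ∀ j : Lat3, nu k * (a j * b j)
          ≤ (nu j * a j) * b j + a j * (nu (j + k) * b j) := by
        intro j
        have htri : nu k ≤ nu j + nu (j + k) := by
          have h1 : nu k = nu ((j + k) + (-j)) := by
            congr 1
            abel
          rw [h1]
          calc nu ((j + k) + (-j)) ≤ nu (j + k) + nu (-j) := nu_triangle _ _
            _ = nu (j + k) + nu j := by rw [nu_neg]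
            _ = nu j + nu (j + k) := by ring
        have hab : 0 ≤ a j * b j := mul_nonneg (han j) (hbn j)
        calc nu k * (a j * b j) ≤ (nu j + nu (j + k)) * (a j * b j) :=
              mul_le_mul_of_nonneg_right htri hab
          _ = (nu j * a j) * b j + a j * (nu (j + k) * b j) := by ring
      calc nu k * P = ∑' j, nu k * (a j * b j) := tsum_mul_left.symm
        _ ≤ ∑' j, ((nu j * a j) * b j + a j * (nu (j + k) * b j)) := by
            refine Summable.tsum_le_tsum pointwise (hPsum.mul_left _) (hS1.add hS2)
        _ = (∑' j, (nu j * a j) * b j) + ∑' j, a j * (nu (j + k) * b j) :=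
            hS1.tsum_add hS2
        _ ≤ Real.sqrt (∑' j, (nu j * a j) ^ 2) * Real.sqrt (∑' j, b j ^ 2)
            + Real.sqrt (∑' j, a j ^ 2) * Real.sqrt (∑' j, (nu (j + k) * b j) ^ 2) :=
            add_le_add hS1le hS2le
        _ = 2 * Real.sqrt T' := by
            rw [hQsum, hBsum, hnorm, hB2sum, Real.sqrt_one, mul_one, one_mul]
            ring
    have hPnonneg : 0 ≤ P := tsum_nonneg fun j => mul_nonneg (han j) (hbn j)
    -- assemble
    have hrho_norm : ‖rhoCoef L ψ k‖ ≤ L ^ (-(3:ℝ)/2) * P := by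
      unfold rhoCoef
      rw [norm_mul]
      have h1 : ‖((L ^ (-(3:ℝ)/2) : ℝ) : ℂ)‖ = L ^ (-(3:ℝ)/2) := by
        rw [Complex.norm_real, Real.norm_eq_abs, abs_of_pos (Real.rpow_pos_of_pos hL _)]
      rw [h1]
      exact mul_le_mul_of_nonneg_left step1 (le_of_lt (Real.rpow_pos_of_pos hL _))
    have hLp_pos : 0 < L ^ (-(3:ℝ)/2) := Real.rpow_pos_of_pos hL _
    have hrho_sq : ‖rhoCoef L ψ k‖ ^ 2 ≤ (L ^ (-(3:ℝ)/2)) ^ 2 * P ^ 2 := by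
      rw [← mul_pow]
      exact pow_le_pow_left₀ (norm_nonneg _) hrho_norm 2
    have hP2 : P ^ 2 ≤ 4 * T' / nu k ^ 2 := by
      have h1 : (nu k * P) ^ 2 ≤ (2 * Real.sqrt T') ^ 2 :=
        pow_le_pow_left₀ (mul_nonneg (le_of_lt hν) hPnonneg) step2 2
      have h2 : (2 * Real.sqrt T') ^ 2 = 4 * T' := by
        rw [mul_pow, Real.sq_sqrt hT'_nonneg]
        ring
      rw [h2, mul_pow] at h1
      rw [le_div_iff₀ (by positivity)]
      linarith
    have hLp2 : (L ^ (-(3:ℝ)/2)) ^ 2 = (L ^ 3)⁻¹ := by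
      rw [← Real.rpow_natCast (L ^ (-(3:ℝ)/2)) 2, ← Real.rpow_mul hL.le]
      norm_num
    have hgk : gfun k = (nu k ^ 4)⁻¹ := by simp [gfun, hk]
    have hknorm2 : knorm L k ^ 2 = (2 * Real.pi / L) ^ 2 * nu k ^ 2 := by
      rw [knorm_eq]; ring
    calc ‖rhoCoef L ψ k‖ ^ 2 / knorm L k ^ 2
        ≤ ((L ^ (-(3:ℝ)/2)) ^ 2 * (4 * T' / nu k ^ 2)) / knorm L k ^ 2 := by
          apply div_le_div_of_nonneg_right ?_ (by positivity)
          exact le_trans hrho_sq (mul_le_mul_of_nonneg_left hP2 (by positivity))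
      _ = (L * TL L ψ / (4 * Real.pi ^ 4)) * gfun k := by
          rw [hLp2, hgk, hknorm2, hTL_eq]
          field_simp
          ring
  have hmaj : Summable fun k => (L * TL L ψ / (4 * Real.pi ^ 4)) * gfun k :=
    summable_gfun.mul_left _
  have hpt : ∀ k : Lat3, (if k = 0 then (0:ℝ) else ‖rhoCoef L ψ k‖ ^ 2 / knorm L k ^ 2)
      ≤ (L * TL L ψ / (4 * Real.pi ^ 4)) * gfun k := by
    intro k
    by_cases hk : k = 0
    · simp [hk, gfun]
    · rw [if_neg hk]
      exact main k hk
  calc WL L ψ = ∑' k : Lat3, (if k = 0 then (0:ℝ)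
        else ‖rhoCoef L ψ k‖ ^ 2 / knorm L k ^ 2) := rfl
    _ ≤ ∑' k : Lat3, (L * TL L ψ / (4 * Real.pi ^ 4)) * gfun k :=
        Summable.tsum_le_tsum hpt hWsum hmaj
    _ = (L * TL L ψ / (4 * Real.pi ^ 4)) * ∑' k, gfun k := tsum_mul_left
    _ = ((∑' k, gfun k) / (4 * Real.pi ^ 4)) * L * TL L ψ := by ring

/-- There is a universal `C > 0` such that for all `L > 0` and all normalized
`ψ ∈ H¹(𝕋³_L)`: `W_L(ψ) ≤ C·L·T_L(ψ)`, hence `E_L(ψ) ≥ (1−CL)T_L(ψ)`; so for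
`L < 1/C` the Pekar functional is nonnegative and strictly positive on every
non-constant normalized `ψ`, while the constant function has `E_L = 0`. -/
theorem WL_le_TL_small_L :
    ∃ C : ℝ, 0 < C ∧ ∀ L : ℝ, 0 < L →
      (∀ ψ : Lat3 → ℂ,
        Summable (fun j : Lat3 => ‖ψ j‖ ^ 2) →
        (∑' j : Lat3, ‖ψ j‖ ^ 2) = 1 →
        Summable (fun k : Lat3 => knorm L k ^ 2 * ‖ψ k‖ ^ 2) →
        (∀ k : Lat3, Summable (fun j : Lat3 => (starRingEnd ℂ) (ψ j) * ψ (j + k))) →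
        Summable (fun k : Lat3 =>
          if k = 0 then (0:ℝ) else ‖rhoCoef L ψ k‖ ^ 2 / knorm L k ^ 2) →
        WL L ψ ≤ C * L * TL L ψ ∧
        EL L ψ ≥ (1 - C * L) * TL L ψ ∧
        (L < 1 / C →
          0 ≤ EL L ψ ∧ ((∃ k : Lat3, k ≠ 0 ∧ ψ k ≠ 0) → 0 < EL L ψ))) ∧
      EL L constFn = 0 := by
  have hπ : 0 < Real.pi := Real.pi_pos
  set S : ℝ := ∑' k, gfun k with hS_def
  have hS_pos : 0 < S := by
    set k₀ : Lat3 := fun i => if i = 0 then 1 else 0 with hk₀_def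
    have hk₀ : k₀ ≠ 0 := by
      intro h
      have := congrFun h (0 : Fin 3)
      simp [hk₀_def] at this
    have h1 : 0 < gfun k₀ := by
      rw [show gfun k₀ = (nu k₀ ^ 4)⁻¹ by simp [gfun, hk₀]]
      have := nu_pos hk₀
      positivity
    exact lt_of_lt_of_le h1 (Summable.le_tsum summable_gfun k₀ fun j _ => gfun_nonneg j)
  set C : ℝ := S / (4 * Real.pi ^ 4) with hC_def
  have hC_pos : 0 < C := by positivity
  refine ⟨C, hC_pos, fun L hL => ⟨fun ψ hsum hnorm hT hconv hWsum => ?_, EL_constFn L⟩⟩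
  have hTLn : 0 ≤ TL L ψ := tsum_nonneg fun k => by positivity
  have h1 : WL L ψ ≤ C * L * TL L ψ := key_bound hL ψ hsum hnorm hT hWsum
  have h2 : EL L ψ ≥ (1 - C * L) * TL L ψ := by
    unfold EL
    nlinarith
  refine ⟨h1, h2, fun hL' => ?_⟩
  have hCL : C * L < 1 := by
    rw [lt_div_iff₀ hC_pos] at hL'
    linarith
  have h3 : (0:ℝ) ≤ 1 - C * L := by linarith
  constructor
  · calc (0:ℝ) ≤ (1 - C * L) * TL L ψ := mul_nonneg h3 hTLn
      _ ≤ EL L ψ := h2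
  · rintro ⟨k, hk, hψk⟩
    have hTpos : 0 < TL L ψ := by
      have hterm : 0 < knorm L k ^ 2 * ‖ψ k‖ ^ 2 := by
        have := knorm_pos hL hk
        have h4 : 0 < ‖ψ k‖ := norm_pos_iff.mpr hψk
        positivity
      exact lt_of_lt_of_le hterm (Summable.le_tsum hT k fun j _ => by positivity)
    have h5 : (0:ℝ) < 1 - C * L := by linarith
    calc (0:ℝ) < (1 - C * L) * TL L ψ := mul_pos h5 hTpos
      _ ≤ EL L ψ := h2
end

section
/- For all L ≥ L₀ > 0 there is a constant C (depending only on L₀) such that for every L²-normalized ψ ∈ H¹(𝕋³_L), W_L(ψ) ≤ T_L(ψ)/2 + C; consequently E_L(ψ) ≥ T_L(ψ)/2 − C, and the Pekar energy e_L = inf E_L satisfies e_L ≥ −C uniformly in L ≥ L₀. -/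
open scoped Real BigOperators

set_option maxHeartbeats 1000000

section PekarAux

lemma knorm_nonneg {L : ℝ} (hL : 0 < L) (k : Lat3) : 0 ≤ knorm L k := by
  have := Real.pi_pos
  unfold knorm
  positivity

lemma knorm_sq {L : ℝ} (k : Lat3) :
    knorm L k ^ 2 = (2 * Real.pi / L)^2 * ∑ i, ((k i : ℝ)) ^ 2 := by
  unfold knorm
  rw [mul_pow, Real.sq_sqrt (Finset.sum_nonneg fun i _ => sq_nonneg _)]

lemma knorm_neg (L : ℝ) (k : Lat3) : knorm L (-k) = knorm L k := by
  unfold knorm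
  congr 1
  refine congrArg _ (Finset.sum_congr rfl fun i _ => ?_)
  push_cast [Pi.neg_apply]
  ring

lemma knorm_add_le {L : ℝ} (hL : 0 < L) (x y : Lat3) :
    knorm L (x + y) ≤ knorm L x + knorm L y := by
  have hπ := Real.pi_pos
  unfold knorm
  rw [← mul_add]
  refine mul_le_mul_of_nonneg_left ?_ (by positivity)
  -- Euclidean triangle inequality
  set u : EuclideanSpace ℝ (Fin 3) := WithLp.toLp 2 (fun i => ((x i : ℝ)))
  set v : EuclideanSpace ℝ (Fin 3) := WithLp.toLp 2 (fun i => ((y i : ℝ)))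
  have hu : ‖u‖ = Real.sqrt (∑ i, ((x i : ℝ)) ^ 2) := by
    rw [EuclideanSpace.norm_eq]
    congr 1
    exact Finset.sum_congr rfl fun i _ => by rw [Real.norm_eq_abs, sq_abs]
  have hv : ‖v‖ = Real.sqrt (∑ i, ((y i : ℝ)) ^ 2) := by
    rw [EuclideanSpace.norm_eq]
    congr 1
    exact Finset.sum_congr rfl fun i _ => by rw [Real.norm_eq_abs, sq_abs]
  have huv : ‖u + v‖ = Real.sqrt (∑ i, (((x + y) i : ℝ)) ^ 2) := by
    rw [EuclideanSpace.norm_eq]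
    congr 1
    refine Finset.sum_congr rfl fun i _ => ?_
    have : (u + v) i = ((x i : ℝ)) + ((y i : ℝ)) := rfl
    rw [this, Real.norm_eq_abs, sq_abs, Pi.add_apply]
    push_cast
    ring
  rw [← hu, ← hv, ← huv]
  exact norm_add_le u v

lemma knorm_tri {L : ℝ} (hL : 0 < L) (j k : Lat3) :
    knorm L k ≤ knorm L j + knorm L (j + k) := by
  have h : k = (j + k) + (-j) := by abel
  calc knorm L k = knorm L ((j + k) + (-j)) := by rw [← h]
    _ ≤ knorm L (j + k) + knorm L (-j) := knorm_add_le hL _ _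
    _ = knorm L j + knorm L (j + k) := by rw [knorm_neg]; ring

def Mx (k : Lat3) : ℕ := Finset.univ.sup fun i => (k i).natAbs

lemma cnt_int (m : ℕ) :
    ∑' x : ℤ, (if x.natAbs ≤ m then (1:ENNReal) else 0) = ((2*m+1 : ℕ) : ENNReal) := by
  rw [tsum_eq_sum (s := Finset.Icc (-(m:ℤ)) m) (fun x hx => by
    rw [if_neg]
    intro h
    exact hx (Finset.mem_Icc.mpr (by omega)))]
  rw [Finset.sum_congr rfl (fun x hx => by
    rw [if_pos]
    have := Finset.mem_Icc.mp hx
    omega)]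
  rw [Finset.sum_const, Int.card_Icc, nsmul_eq_mul, mul_one]
  congr 1
  omega

noncomputable def Fi (φ : ℕ → ENNReal) (i : Fin 3) (k : Lat3) : ENNReal :=
  if ((∀ j, (k j).natAbs ≤ (k i).natAbs) ∧ k i ≠ 0) then φ ((k i).natAbs) else 0

lemma lat3_count (φ : ℕ → ENNReal) :
    ∑' k : Lat3, (if k = 0 then 0 else φ (Mx k))
      ≤ 27 * ∑' n : ℤ, (if n = 0 then 0 else ((n.natAbs : ENNReal))^2 * φ n.natAbs) := by
  have hpt : ∀ k : Lat3, (if k = 0 then 0 else φ (Mx k)) ≤ ∑ i : Fin 3, Fi φ i k := by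
    intro k
    by_cases hk : k = 0
    · rw [if_pos hk]; exact zero_le
    · rw [if_neg hk]
      obtain ⟨i, -, hi⟩ := Finset.exists_mem_eq_sup (Finset.univ : Finset (Fin 3))
        Finset.univ_nonempty (fun i => (k i).natAbs)
      have hle : ∀ j, (k j).natAbs ≤ (k i).natAbs := by
        intro j
        rw [← hi]
        exact Finset.le_sup (f := fun i => (k i).natAbs) (Finset.mem_univ j)
      have hki : k i ≠ 0 := by
        intro h0
        obtain ⟨j, hj⟩ := Function.ne_iff.mp hk
        have h1 := hle j
        have : (k j).natAbs ≠ 0 := fun h => hj (Int.natAbs_eq_zero.mp h)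
        omega
      have hFi : Fi φ i k = φ (Mx k) := by
        rw [Fi, if_pos ⟨hle, hki⟩, ← hi]
        rfl
      calc φ (Mx k) = Fi φ i k := hFi.symm
        _ ≤ ∑ i : Fin 3, Fi φ i k :=
            Finset.single_le_sum (f := fun i => Fi φ i k) (fun _ _ => zero_le)
              (Finset.mem_univ i)
  refine le_trans (ENNReal.tsum_le_tsum hpt) ?_
  rw [Summable.tsum_finsetSum (fun i _ => ENNReal.summable)]
  have hperm : ∀ i : Fin 3, ∑' k : Lat3, Fi φ i k = ∑' k : Lat3, Fi φ 0 k := by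
    intro i
    set σ : Equiv.Perm (Fin 3) := Equiv.swap 0 i with hσ
    let e : Lat3 ≃ Lat3 :=
      ⟨fun k => k ∘ σ, fun k => k ∘ σ.symm,
       fun k => by funext j; simp, fun k => by funext j; simp⟩
    have key : ∀ k : Lat3, Fi φ 0 (e k) = Fi φ i k := by
      intro k
      have h0 : σ 0 = i := Equiv.swap_apply_left 0 i
      show Fi φ 0 (fun j => k (σ j)) = Fi φ i k
      rw [Fi, Fi, h0]
      refine if_congr ?_ rfl rfl
      constructor
      · rintro ⟨h1, h2⟩
        exact ⟨fun j => by simpa using h1 (σ.symm j), h2⟩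
      · rintro ⟨h1, h2⟩
        exact ⟨fun j => h1 (σ j), h2⟩
    rw [← Equiv.tsum_eq e (Fi φ 0)]
    exact tsum_congr fun k => (key k).symm
  rw [Finset.sum_congr rfl (fun i _ => hperm i), Finset.sum_const]
  simp only [Finset.card_univ, Fintype.card_fin, smul_eq_mul]
  -- now compute ∑' k, Fi φ 0 k
  let e3 : Lat3 ≃ ℤ × ℤ × ℤ :=
    ⟨fun k => (k 0, k 1, k 2), fun p => ![p.1, p.2.1, p.2.2],
     fun k => by funext j; fin_cases j <;> rfl,
     fun p => rfl⟩
  have hval : ∀ n x y : ℤ, Fi φ 0 (![n,x,y]) =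
      (if x.natAbs ≤ n.natAbs then (1:ENNReal) else 0) *
        ((if y.natAbs ≤ n.natAbs then (1:ENNReal) else 0) *
          (if n = 0 then 0 else φ n.natAbs)) := by
    intro n x y
    rcases eq_or_ne n 0 with h|h
    · subst h
      rw [Fi, if_neg (by rintro ⟨-, h2⟩; exact h2 rfl)]
      simp
    · by_cases hx : x.natAbs ≤ n.natAbs <;> by_cases hy : y.natAbs ≤ n.natAbs
      · rw [Fi, if_pos ⟨fun j => by fin_cases j <;> simpa, h⟩, if_pos hx, if_pos hy,
          if_neg h, one_mul, one_mul]
        rfl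
      · rw [Fi, if_neg (by rintro ⟨h1, -⟩; exact hy (by simpa using h1 2)), if_neg hy]
        simp
      · rw [Fi, if_neg (by rintro ⟨h1, -⟩; exact hx (by simpa using h1 1)), if_neg hx]
        simp
      · rw [Fi, if_neg (by rintro ⟨h1, -⟩; exact hx (by simpa using h1 1)), if_neg hx]
        simp
  have hV : ∑' k : Lat3, Fi φ 0 k
      ≤ 9 * ∑' n : ℤ, (if n = 0 then 0 else ((n.natAbs : ENNReal))^2 * φ n.natAbs) := by
    rw [← Equiv.tsum_eq e3.symm (Fi φ 0)]
    have : ∀ p : ℤ × ℤ × ℤ, Fi φ 0 (e3.symm p) =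
        (if p.2.1.natAbs ≤ p.1.natAbs then (1:ENNReal) else 0) *
          ((if p.2.2.natAbs ≤ p.1.natAbs then (1:ENNReal) else 0) *
            (if p.1 = 0 then 0 else φ p.1.natAbs)) := fun p => hval p.1 p.2.1 p.2.2
    rw [tsum_congr this, ENNReal.tsum_prod']
    have hinner : ∀ n : ℤ,
        (∑' (q : ℤ × ℤ), (if q.1.natAbs ≤ n.natAbs then (1:ENNReal) else 0) *
          ((if q.2.natAbs ≤ n.natAbs then (1:ENNReal) else 0) *
            (if n = 0 then 0 else φ n.natAbs)))
        ≤ (if n = 0 then 0 else 9 * ((n.natAbs : ENNReal)^2 * φ n.natAbs)) := by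
      intro n
      rw [ENNReal.tsum_prod']
      have h1 : ∀ x : ℤ, (∑' y : ℤ, (if x.natAbs ≤ n.natAbs then (1:ENNReal) else 0) *
          ((if y.natAbs ≤ n.natAbs then (1:ENNReal) else 0) *
            (if n = 0 then 0 else φ n.natAbs)))
          = (if x.natAbs ≤ n.natAbs then (1:ENNReal) else 0) *
            (((2*n.natAbs+1 : ℕ) : ENNReal) * (if n = 0 then 0 else φ n.natAbs)) := by
        intro x
        rw [ENNReal.tsum_mul_left, ENNReal.tsum_mul_right, cnt_int]
      rw [tsum_congr h1, ENNReal.tsum_mul_right, cnt_int]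
      rcases eq_or_ne n 0 with h|h
      · simp [h]
      · rw [if_neg h, if_neg h]
        have hM : 1 ≤ n.natAbs := by omega
        have hn3 : (2*n.natAbs+1 : ℕ) ≤ 3*n.natAbs := by omega
        have hc : ((2*n.natAbs+1 : ℕ) : ENNReal) ≤ 3 * (n.natAbs : ENNReal) := by
          calc ((2*n.natAbs+1 : ℕ) : ENNReal) ≤ ((3*n.natAbs : ℕ) : ENNReal) :=
                Nat.cast_le.mpr hn3
            _ = 3 * (n.natAbs : ENNReal) := by push_cast; ring
        calc ((2*n.natAbs+1 : ℕ) : ENNReal) * (((2*n.natAbs+1 : ℕ) : ENNReal) * φ n.natAbs)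
            ≤ (3 * (n.natAbs : ENNReal)) * ((3 * (n.natAbs : ENNReal)) * φ n.natAbs) := by
              exact mul_le_mul' hc (mul_le_mul' hc le_rfl)
          _ = 9 * ((n.natAbs : ENNReal)^2 * φ n.natAbs) := by ring
    refine le_trans (ENNReal.tsum_le_tsum hinner) ?_
    rw [← ENNReal.tsum_mul_left]
    refine ENNReal.tsum_le_tsum fun n => ?_
    rcases eq_or_ne n 0 with h|h
    · simp [h]
    · rw [if_neg h, if_neg h]
  rw [nsmul_eq_mul]
  refine le_trans (mul_le_mul' le_rfl hV) ?_
  rw [← mul_assoc]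
  norm_num

-- telescoping tail bound over ℕ
lemma nat_tail_bound (b : ℝ) (hb : 0 ≤ b) (N : ℕ) (hN : 1 ≤ N) :
    ∑' m : ℕ, (if N < m then ENNReal.ofReal (b / (m:ℝ)^2) else 0)
      ≤ ENNReal.ofReal (b / N) := by
  set r : ℕ → ℝ := fun m => if N < m then b / (m:ℝ)^2 else 0 with hr
  set w : ℕ → ℝ := fun m => if N < m then b * (1/((m:ℝ)-1) - 1/m) else 0 with hw
  have hrnn : ∀ m, 0 ≤ r m := by
    intro m; rw [hr]; dsimp only; split
    · positivity
    · exact le_rfl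
  have hrw : ∀ m, r m ≤ w m := by
    intro m; rw [hr, hw]; dsimp only
    split
    · rename_i h
      have hm2 : (2:ℝ) ≤ m := by exact_mod_cast (by omega : 2 ≤ m)
      have h1 : (0:ℝ) < (m:ℝ) - 1 := by linarith
      have h0 : (0:ℝ) < (m:ℝ) := by linarith
      have key : 1/((m:ℝ)-1) - 1/m = 1/(((m:ℝ)-1)*m) := by
        field_simp
        ring
      rw [key]
      have : ((m:ℝ)-1)*m ≤ (m:ℝ)^2 := by nlinarith
      have h2 : 1/(m:ℝ)^2 ≤ 1/(((m:ℝ)-1)*m) := by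
        apply one_div_le_one_div_of_le
        · positivity
        · exact this
      calc b / (m:ℝ)^2 = b * (1/(m:ℝ)^2) := by ring
        _ ≤ b * (1/(((m:ℝ)-1)*m)) := by
            exact mul_le_mul_of_nonneg_left h2 hb
        _ = b * (1/(((m:ℝ)-1)*m)) := rfl
    · exact le_rfl
  -- HasSum w (b/N)
  have hwsum : HasSum w (b / N) := by
    have hinj : Function.Injective (fun j : ℕ => j + (N+1)) := add_left_injective (N+1)
    have hsupp : ∀ m, m ∉ Set.range (fun j : ℕ => j + (N+1)) → w m = 0 := by
      intro m hm
      rw [hw]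
      dsimp only
      rw [if_neg]
      intro h
      exact hm ⟨m - (N+1), by show m - (N+1) + (N+1) = m; omega⟩
    have hiff := (Function.Injective.hasSum_iff hinj hsupp (f := w) (a := b / N))
    rw [← hiff]
    have hcomp : ∀ j : ℕ, w (j + (N+1)) = b * (1/((j:ℝ)+N) - 1/((j:ℝ)+N+1)) := by
      intro j
      rw [hw]; dsimp only
      rw [if_pos (by omega)]
      have : ((j + (N+1) : ℕ) : ℝ) = (j:ℝ) + N + 1 := by push_cast; ring
      rw [this]
      ring_nf
    rw [show (w ∘ fun j : ℕ => j + (N+1)) = fun j : ℕ => b * (1/((j:ℝ)+N) - 1/((j:ℝ)+N+1))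
      from funext fun j => hcomp j]
    have hnn : ∀ j : ℕ, 0 ≤ b * (1/((j:ℝ)+N) - 1/((j:ℝ)+N+1)) := by
      intro j
      have h0 : (0:ℝ) < (j:ℝ) + N := by
        have : (1:ℝ) ≤ (N:ℝ) := by exact_mod_cast hN
        positivity
      have : 1/((j:ℝ)+N+1) ≤ 1/((j:ℝ)+N) := by
        apply one_div_le_one_div_of_le h0; linarith
      have := sub_nonneg.mpr this
      positivity
    rw [hasSum_iff_tendsto_nat_of_nonneg hnn]
    have hps : ∀ n : ℕ, ∑ i ∈ Finset.range n, b * (1/((i:ℝ)+N) - 1/((i:ℝ)+N+1))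
        = b * (1/(N:ℝ) - 1/((n:ℝ)+N)) := by
      intro n
      rw [← Finset.mul_sum]
      congr 1
      have h := Finset.sum_range_sub' (fun i : ℕ => 1/((i:ℝ)+N)) n
      refine (Finset.sum_congr rfl fun i _ => ?_).trans (h.trans ?_)
      · push_cast; ring
      · norm_num
    rw [show (fun n : ℕ => ∑ i ∈ Finset.range n, b * (1/((i:ℝ)+N) - 1/((i:ℝ)+N+1)))
      = fun n : ℕ => b * (1/(N:ℝ) - 1/((n:ℝ)+N)) from funext hps]
    have htend : Filter.Tendsto (fun n : ℕ => 1/((n:ℝ)+N)) Filter.atTop (nhds 0) := by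
      simp only [one_div]
      exact Filter.Tendsto.inv_tendsto_atTop
        (Filter.tendsto_atTop_add_const_right _ _ tendsto_natCast_atTop_atTop)
    have : Filter.Tendsto (fun n : ℕ => b * (1/(N:ℝ) - 1/((n:ℝ)+N))) Filter.atTop
        (nhds (b * (1/(N:ℝ) - 0))) :=
      (Filter.Tendsto.const_sub _ htend).const_mul b
    simpa [one_div, div_eq_mul_inv] using this
  have hrsum : Summable r := Summable.of_nonneg_of_le hrnn hrw hwsum.summable
  have h1 : ∑' m : ℕ, (if N < m then ENNReal.ofReal (b / (m:ℝ)^2) else 0)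
      = ∑' m : ℕ, ENNReal.ofReal (r m) := by
    refine tsum_congr fun m => ?_
    rw [hr]; dsimp only; split <;> simp
  rw [h1, ← ENNReal.ofReal_tsum_of_nonneg hrnn hrsum]
  apply ENNReal.ofReal_le_ofReal
  calc ∑' m, r m ≤ ∑' m, w m := Summable.tsum_le_tsum hrw hrsum hwsum.summable
    _ = b / N := hwsum.tsum_eq
    _ ≤ b / N := le_rfl

lemma int_sum_min_le (a b : ℝ) (ha : 0 ≤ a) (hb : 0 ≤ b) (N : ℕ) (hN : 1 ≤ N) :
    ∑' n : ℤ, (if n = 0 then 0 else ENNReal.ofReal (min a (b / ((n.natAbs:ℝ))^2)))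
      ≤ ENNReal.ofReal (2*N*a) + 2 * ENNReal.ofReal (b/N) := by
  set A : ℤ → ENNReal := fun n => if (n ≠ 0 ∧ n.natAbs ≤ N) then ENNReal.ofReal a else 0 with hA
  set B : ℤ → ENNReal := fun n => if N < n.natAbs then ENNReal.ofReal (b / ((n.natAbs:ℝ))^2) else 0
    with hB
  have hpt : ∀ n : ℤ, (if n = 0 then 0 else ENNReal.ofReal (min a (b / ((n.natAbs:ℝ))^2)))
      ≤ A n + B n := by
    intro n
    rcases eq_or_ne n 0 with h|h
    · rw [if_pos h]; exact zero_le
    rw [if_neg h, hA, hB]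
    dsimp only
    by_cases hle : n.natAbs ≤ N
    · rw [if_pos ⟨h, hle⟩]
      exact le_add_right (le_trans (ENNReal.ofReal_le_ofReal (min_le_left _ _)) le_rfl)
    · rw [if_neg (fun hc => hle hc.2), zero_add, if_pos (by omega)]
      exact ENNReal.ofReal_le_ofReal (min_le_right _ _)
  refine le_trans (ENNReal.tsum_le_tsum hpt) ?_
  rw [ENNReal.tsum_add]
  refine add_le_add ?_ ?_
  · -- head: at most 2N nonzero terms each ≤ ofReal a
    rw [tsum_eq_sum (s := Finset.Icc (-(N:ℤ)) N) (fun n hn => by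
      rw [hA]; dsimp only; rw [if_neg]
      rintro ⟨-, h2⟩
      exact hn (Finset.mem_Icc.mpr (by omega)))]
    rw [← Finset.sum_subset (Finset.erase_subset 0 (Finset.Icc (-(N:ℤ)) N))
      (fun n hn hn' => by
        rw [hA]; dsimp only; rw [if_neg]
        rintro ⟨h1, -⟩
        exact hn' (Finset.mem_erase.mpr ⟨h1, hn⟩))]
    calc ∑ n ∈ (Finset.Icc (-(N:ℤ)) N).erase 0, A n
        ≤ ∑ _n ∈ (Finset.Icc (-(N:ℤ)) N).erase 0, ENNReal.ofReal a := by
          refine Finset.sum_le_sum fun n _ => ?_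
          rw [hA]; dsimp only; split
          · exact le_rfl
          · exact zero_le
      _ = ((Finset.Icc (-(N:ℤ)) N).erase 0).card * ENNReal.ofReal a := by
          rw [Finset.sum_const, nsmul_eq_mul]
      _ ≤ ENNReal.ofReal (2*N*a) := by
          have hcard : ((Finset.Icc (-(N:ℤ)) N).erase 0).card = 2*N := by
            rw [Finset.card_erase_of_mem (Finset.mem_Icc.mpr (by omega)), Int.card_Icc]
            omega
          rw [hcard, ENNReal.ofReal_mul (by positivity), ← ENNReal.ofReal_natCast (2*N)]
          exact mul_le_mul' (by exact_mod_cast le_rfl) le_rfl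
  · -- tail: positive and negative parts
    have hsplit : ∀ n : ℤ, B n ≤ (if 0 ≤ n then B n else 0) + (if n < 0 then B n else 0) := by
      intro n
      rcases le_or_gt 0 n with h|h
      · rw [if_pos h, if_neg (by omega)]; exact le_add_right le_rfl
      · rw [if_neg (by omega), if_pos h, zero_add]
    refine le_trans (ENNReal.tsum_le_tsum hsplit) ?_
    rw [ENNReal.tsum_add, two_mul]
    refine add_le_add ?_ ?_
    · -- nonnegative part
      have hinj : Function.Injective (fun m : ℕ => (m : ℤ)) := fun x y h => by
        have h' : (x:ℤ) = (y:ℤ) := h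
        exact_mod_cast h'
      have hsupp : Function.support (fun n : ℤ => if 0 ≤ n then B n else 0)
          ⊆ Set.range (fun m : ℕ => (m:ℤ)) := by
        intro n hn
        rw [Function.mem_support] at hn
        by_cases h : (0:ℤ) ≤ n
        · exact ⟨n.toNat, show ((n.toNat:ℤ)) = n by omega⟩
        · exact absurd (if_neg h) hn
      rw [← Function.Injective.tsum_eq hinj hsupp]
      have : ∀ m : ℕ, (if (0:ℤ) ≤ (m:ℤ) then B (m:ℤ) else 0)
          = (if N < m then ENNReal.ofReal (b / (m:ℝ)^2) else 0) := by
        intro m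
        rw [if_pos (by positivity), hB]
        dsimp only
        rw [Int.natAbs_natCast]
      rw [tsum_congr this]
      exact nat_tail_bound b hb N hN
    · -- negative part
      have hinj : Function.Injective (fun m : ℕ => -((m:ℤ)+1)) := fun x y h => by
        have h' : -((x:ℤ)+1) = -((y:ℤ)+1) := h
        omega
      have hsupp : Function.support (fun n : ℤ => if n < 0 then B n else 0)
          ⊆ Set.range (fun m : ℕ => -((m:ℤ)+1)) := by
        intro n hn
        rw [Function.mem_support] at hn
        by_cases h : n < 0
        · exact ⟨(-(n+1)).toNat, show -(((-(n+1)).toNat:ℤ)+1) = n by omega⟩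
        · exact absurd (if_neg h) hn
      rw [← Function.Injective.tsum_eq hinj hsupp]
      have hcomp : ∀ m : ℕ, (if (-((m:ℤ)+1) < 0) then B (-((m:ℤ)+1)) else 0)
          = (if N < m+1 then ENNReal.ofReal (b / ((m+1:ℕ):ℝ)^2) else 0) := by
        intro m
        rw [if_pos (by omega), hB]
        dsimp only
        have : (-((m:ℤ)+1)).natAbs = m+1 := by omega
        rw [this]
      rw [tsum_congr hcomp]
      refine le_trans (ENNReal.tsum_comp_le_tsum_of_injective
        (f := fun m : ℕ => m + 1) (add_left_injective 1)
        (fun m => if N < m then ENNReal.ofReal (b / (m:ℝ)^2) else 0)) ?_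
      exact nat_tail_bound b hb N hN

lemma Mx_one_le {k : Lat3} (hk : k ≠ 0) : 1 ≤ Mx k := by
  obtain ⟨j, hj⟩ := Function.ne_iff.mp hk
  have h1 : (k j).natAbs ≤ Mx k := Finset.le_sup (f := fun i => (k i).natAbs) (Finset.mem_univ j)
  have : (k j).natAbs ≠ 0 := fun h => hj (Int.natAbs_eq_zero.mp h)
  omega

lemma Mx_sq_le_sum (k : Lat3) : ((Mx k : ℝ))^2 ≤ ∑ i, ((k i:ℝ))^2 := by
  obtain ⟨i, -, hi⟩ := Finset.exists_mem_eq_sup (Finset.univ : Finset (Fin 3))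
    Finset.univ_nonempty (fun i => (k i).natAbs)
  have h1 : ((Mx k : ℝ))^2 = ((k i : ℝ))^2 := by
    rw [Mx, hi, Nat.cast_natAbs, Int.cast_abs, sq_abs]
  rw [h1]
  exact Finset.single_le_sum (f := fun i => ((k i:ℝ))^2) (fun j _ => sq_nonneg _)
    (Finset.mem_univ i)


end PekarAux

/-- For every `L₀ > 0` there is a constant `C` (depending only on `L₀`) such that for all
`L ≥ L₀` and all normalized `ψ ∈ H¹(𝕋³_L)`: `W_L(ψ) ≤ T_L(ψ)/2 + C`, hence
`E_L(ψ) ≥ T_L(ψ)/2 − C` and `E_L(ψ) ≥ −C`; in particular the Pekar energy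
`e_L = inf E_L ≥ −C` uniformly in `L ≥ L₀`. -/
theorem WL_le_half_TL_add_const :
    ∀ L₀ : ℝ, 0 < L₀ → ∃ C : ℝ, 0 < C ∧ ∀ L : ℝ, L₀ ≤ L →
      ∀ ψ : Lat3 → ℂ,
        Summable (fun j : Lat3 => ‖ψ j‖ ^ 2) →
        (∑' j : Lat3, ‖ψ j‖ ^ 2) = 1 →
        Summable (fun k : Lat3 => knorm L k ^ 2 * ‖ψ k‖ ^ 2) →
        (∀ k : Lat3, Summable (fun j : Lat3 => (starRingEnd ℂ) (ψ j) * ψ (j + k))) →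
        Summable (fun k : Lat3 =>
          if k = 0 then (0:ℝ) else ‖rhoCoef L ψ k‖ ^ 2 / knorm L k ^ 2) →
        WL L ψ ≤ TL L ψ / 2 + C ∧
        EL L ψ ≥ TL L ψ / 2 - C ∧
        EL L ψ ≥ -C := by
  intro L₀ hL₀
  refine ⟨3 + 2/L₀, by positivity, ?_⟩
  intro L hL ψ h1 h2 h3 h4 h5
  have hL0 : 0 < L := lt_of_lt_of_le hL₀ hL
  have hπ : (3:ℝ) < Real.pi := Real.pi_gt_three
  have hπ0 : (0:ℝ) < Real.pi := by linarith
  set T := TL L ψ with hTdef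
  have hT0 : 0 ≤ T := by
    rw [hTdef, TL]
    exact tsum_nonneg fun k => by positivity
  set S := T + 1 with hSdef
  have hS0 : (0:ℝ) < S := by linarith
  have hS1 : (1:ℝ) ≤ S := by linarith
  have hsq : Real.sqrt S ^ 2 = S := Real.sq_sqrt hS0.le
  have hsS1 : (1:ℝ) ≤ Real.sqrt S := by
    rw [show (1:ℝ) = Real.sqrt 1 by simp]
    exact Real.sqrt_le_sqrt hS1
  have hsS0 : (0:ℝ) < Real.sqrt S := by linarith
  set P := L ^ (-(3:ℝ)/2) with hPdef
  have hP0 : 0 < P := Real.rpow_pos_of_pos hL0 _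
  have hP2 : P^2 = (L^3)⁻¹ := by
    rw [hPdef, ← Real.rpow_natCast (L ^ (-(3:ℝ)/2)) 2, ← Real.rpow_mul hL0.le]
    rw [show (-(3:ℝ)/2 * (2:ℕ)) = -(3:ℕ) by push_cast; ring]
    rw [Real.rpow_neg hL0.le, Real.rpow_natCast]
  have hTtsum : (∑' j : Lat3, knorm L j^2 * ‖ψ j‖^2) = T := rfl
  -- translation invariance
  have htr1 : ∀ k : Lat3, Summable (fun j : Lat3 => ‖ψ (j+k)‖^2) := by
    intro k
    exact ((Equiv.addRight k).summable_iff (f := fun j : Lat3 => ‖ψ j‖^2)).mpr h1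
  have htr1s : ∀ k : Lat3, (∑' j : Lat3, ‖ψ (j+k)‖^2) = 1 := fun k =>
    ((Equiv.addRight k).tsum_eq (fun j : Lat3 => ‖ψ j‖^2)).trans h2
  have htrT : ∀ k : Lat3, Summable (fun j : Lat3 => knorm L (j+k)^2 * ‖ψ (j+k)‖^2) := by
    intro k
    exact ((Equiv.addRight k).summable_iff
      (f := fun j : Lat3 => knorm L j^2 * ‖ψ j‖^2)).mpr h3
  have htrTs : ∀ k : Lat3, (∑' j : Lat3, knorm L (j+k)^2 * ‖ψ (j+k)‖^2) = T := fun k =>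
    ((Equiv.addRight k).tsum_eq (fun j : Lat3 => knorm L j^2 * ‖ψ j‖^2))
  clear_value T S P
  -- summability of products
  have sAB : ∀ k : Lat3, Summable (fun j : Lat3 => ‖ψ j‖ * ‖ψ (j+k)‖) := by
    intro k
    refine Summable.of_nonneg_of_le (fun j => by positivity)
      (fun j => ?_) (((h1.add (htr1 k)).div_const 2))
    nlinarith [sq_nonneg (‖ψ j‖ - ‖ψ (j+k)‖)]
  have hR : ∀ k : Lat3, ‖(∑' j : Lat3, (starRingEnd ℂ) (ψ j) * ψ (j+k))‖
      ≤ ∑' j : Lat3, ‖ψ j‖ * ‖ψ (j+k)‖ := by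
    intro k
    have hnorm : (fun j : Lat3 => ‖(starRingEnd ℂ) (ψ j) * ψ (j+k)‖)
        = fun j => ‖ψ j‖ * ‖ψ (j+k)‖ := funext fun j => by
      rw [norm_mul, RCLike.norm_conj]
    calc ‖(∑' j : Lat3, (starRingEnd ℂ) (ψ j) * ψ (j+k))‖
        ≤ ∑' j : Lat3, ‖(starRingEnd ℂ) (ψ j) * ψ (j+k)‖ :=
          norm_tsum_le_tsum_norm (by rw [hnorm]; exact sAB k)
      _ = ∑' j : Lat3, ‖ψ j‖ * ‖ψ (j+k)‖ := by rw [hnorm]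
  have hRle1 : ∀ k : Lat3, (∑' j : Lat3, ‖ψ j‖ * ‖ψ (j+k)‖) ≤ 1 := by
    intro k
    calc (∑' j : Lat3, ‖ψ j‖ * ‖ψ (j+k)‖)
        ≤ ∑' j : Lat3, (‖ψ j‖^2 + ‖ψ (j+k)‖^2)/2 := by
          refine Summable.tsum_le_tsum (fun j => ?_) (sAB k) ((h1.add (htr1 k)).div_const 2)
          nlinarith [sq_nonneg (‖ψ j‖ - ‖ψ (j+k)‖)]
      _ = ((∑' j : Lat3, ‖ψ j‖^2) + (∑' j : Lat3, ‖ψ (j+k)‖^2))/2 := by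
          rw [tsum_div_const, Summable.tsum_add h1 (htr1 k)]
      _ = 1 := by rw [h2, htr1s k]; norm_num
  have hnormP : ∀ k : Lat3, ‖rhoCoef L ψ k‖
      = P * ‖(∑' j : Lat3, (starRingEnd ℂ) (ψ j) * ψ (j+k))‖ := by
    intro k
    rw [rhoCoef, norm_mul, Complex.norm_real, Real.norm_eq_abs, ← hPdef, abs_of_pos hP0]
  have hB1 : ∀ k : Lat3, ‖rhoCoef L ψ k‖ ≤ P := by
    intro k
    rw [hnormP k]
    calc P * ‖(∑' j : Lat3, (starRingEnd ℂ) (ψ j) * ψ (j+k))‖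
        ≤ P * 1 := mul_le_mul_of_nonneg_left (le_trans (hR k) (hRle1 k)) hP0.le
      _ = P := mul_one P
  -- weighted sums
  have hsum1 : ∀ k : Lat3, Summable (fun j : Lat3 => knorm L j * ‖ψ j‖ * ‖ψ (j+k)‖)
      ∧ (∑' j : Lat3, knorm L j * ‖ψ j‖ * ‖ψ (j+k)‖) ≤ Real.sqrt S := by
    intro k
    have hmaj : Summable (fun j : Lat3 =>
        (knorm L j^2 * ‖ψ j‖^2 + S * ‖ψ (j+k)‖^2)/(2*Real.sqrt S)) :=
      (h3.add ((htr1 k).mul_left S)).div_const _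
    have hle : ∀ j : Lat3, knorm L j * ‖ψ j‖ * ‖ψ (j+k)‖
        ≤ (knorm L j^2 * ‖ψ j‖^2 + S * ‖ψ (j+k)‖^2)/(2*Real.sqrt S) := by
      intro j
      rw [le_div_iff₀ (by positivity)]
      nlinarith [sq_nonneg (knorm L j * ‖ψ j‖ - Real.sqrt S * ‖ψ (j+k)‖), hsq,
        norm_nonneg (ψ j), norm_nonneg (ψ (j+k)), knorm_nonneg hL0 j]
    have hsumm := Summable.of_nonneg_of_le
      (fun j => mul_nonneg (mul_nonneg (knorm_nonneg hL0 j) (norm_nonneg _)) (norm_nonneg _))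
      hle hmaj
    refine ⟨hsumm, ?_⟩
    calc (∑' j : Lat3, knorm L j * ‖ψ j‖ * ‖ψ (j+k)‖)
        ≤ ∑' j : Lat3, (knorm L j^2 * ‖ψ j‖^2 + S * ‖ψ (j+k)‖^2)/(2*Real.sqrt S) :=
          Summable.tsum_le_tsum hle hsumm hmaj
      _ = (T + S * 1)/(2*Real.sqrt S) := by
          rw [tsum_div_const, Summable.tsum_add h3 ((htr1 k).mul_left S), tsum_mul_left, htr1s k, hTtsum]
      _ ≤ (2*S)/(2*Real.sqrt S) := by
          gcongr
          linarith
      _ = Real.sqrt S := by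
          rw [div_eq_iff (by positivity : (2*Real.sqrt S) ≠ 0)]
          nlinarith [hsq]
  have hsum2 : ∀ k : Lat3, Summable (fun j : Lat3 => knorm L (j+k) * ‖ψ j‖ * ‖ψ (j+k)‖)
      ∧ (∑' j : Lat3, knorm L (j+k) * ‖ψ j‖ * ‖ψ (j+k)‖) ≤ Real.sqrt S := by
    intro k
    have hmaj : Summable (fun j : Lat3 =>
        (S * ‖ψ j‖^2 + knorm L (j+k)^2 * ‖ψ (j+k)‖^2)/(2*Real.sqrt S)) :=
      ((h1.mul_left S).add (htrT k)).div_const _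
    have hle : ∀ j : Lat3, knorm L (j+k) * ‖ψ j‖ * ‖ψ (j+k)‖
        ≤ (S * ‖ψ j‖^2 + knorm L (j+k)^2 * ‖ψ (j+k)‖^2)/(2*Real.sqrt S) := by
      intro j
      rw [le_div_iff₀ (by positivity)]
      nlinarith [sq_nonneg (Real.sqrt S * ‖ψ j‖ - knorm L (j+k) * ‖ψ (j+k)‖), hsq,
        norm_nonneg (ψ j), norm_nonneg (ψ (j+k)), knorm_nonneg hL0 (j+k)]
    have hsumm := Summable.of_nonneg_of_le
      (fun j => mul_nonneg (mul_nonneg (knorm_nonneg hL0 (j+k)) (norm_nonneg _))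
        (norm_nonneg _)) hle hmaj
    refine ⟨hsumm, ?_⟩
    calc (∑' j : Lat3, knorm L (j+k) * ‖ψ j‖ * ‖ψ (j+k)‖)
        ≤ ∑' j : Lat3, (S * ‖ψ j‖^2 + knorm L (j+k)^2 * ‖ψ (j+k)‖^2)/(2*Real.sqrt S) :=
          Summable.tsum_le_tsum hle hsumm hmaj
      _ = (S * 1 + T)/(2*Real.sqrt S) := by
          rw [tsum_div_const, Summable.tsum_add (h1.mul_left S) (htrT k), tsum_mul_left, h2, htrTs k]
      _ ≤ (2*S)/(2*Real.sqrt S) := by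
          gcongr
          linarith
      _ = Real.sqrt S := by
          rw [div_eq_iff (by positivity : (2*Real.sqrt S) ≠ 0)]
          nlinarith [hsq]
  have hB2 : ∀ k : Lat3, knorm L k * ‖rhoCoef L ψ k‖ ≤ P * (2 * Real.sqrt S) := by
    intro k
    have hκnn : 0 ≤ knorm L k := knorm_nonneg hL0 k
    rw [hnormP k, ← mul_assoc, mul_comm (knorm L k) P, mul_assoc]
    refine mul_le_mul_of_nonneg_left ?_ hP0.le
    calc knorm L k * ‖(∑' j : Lat3, (starRingEnd ℂ) (ψ j) * ψ (j+k))‖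
        ≤ knorm L k * (∑' j : Lat3, ‖ψ j‖ * ‖ψ (j+k)‖) :=
          mul_le_mul_of_nonneg_left (hR k) hκnn
      _ = ∑' j : Lat3, knorm L k * (‖ψ j‖ * ‖ψ (j+k)‖) := tsum_mul_left.symm
      _ ≤ ∑' j : Lat3, (knorm L j * ‖ψ j‖ * ‖ψ (j+k)‖
            + knorm L (j+k) * ‖ψ j‖ * ‖ψ (j+k)‖) := by
          refine Summable.tsum_le_tsum (fun j => ?_) ((sAB k).mul_left _)
            ((hsum1 k).1.add ((hsum2 k).1))
          have htri := knorm_tri hL0 j k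
          have hab : 0 ≤ ‖ψ j‖ * ‖ψ (j+k)‖ := by positivity
          nlinarith [mul_le_mul_of_nonneg_right htri hab]
      _ = (∑' j : Lat3, knorm L j * ‖ψ j‖ * ‖ψ (j+k)‖)
            + (∑' j : Lat3, knorm L (j+k) * ‖ψ j‖ * ‖ψ (j+k)‖) :=
          Summable.tsum_add (hsum1 k).1 (hsum2 k).1
      _ ≤ Real.sqrt S + Real.sqrt S := add_le_add (hsum1 k).2 (hsum2 k).2
      _ = 2 * Real.sqrt S := by ring
  -- constants
  set a : ℝ := 1/(4*Real.pi^2*L) with hadef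
  set b : ℝ := S*L/(4*Real.pi^4) with hbdef
  clear_value a b
  have ha : 0 ≤ a := by rw [hadef]; positivity
  have hb : 0 ≤ b := by rw [hbdef]; positivity
  -- the per-mode bound
  have hfk : ∀ k : Lat3, k ≠ 0 →
      ‖rhoCoef L ψ k‖^2 / knorm L k^2 ≤ min a (b/((Mx k:ℝ))^2) / ((Mx k:ℝ))^2 := by
    intro k hk
    have hM1 : (1:ℝ) ≤ (Mx k:ℝ) := by exact_mod_cast Mx_one_le hk
    have hM0 : (0:ℝ) < (Mx k:ℝ) := by linarith
    have hknorm2 : ((2*Real.pi/L)^2) * ((Mx k:ℝ))^2 ≤ knorm L k^2 := by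
      rw [knorm_sq]
      exact mul_le_mul_of_nonneg_left (Mx_sq_le_sum k) (by positivity)
    have hcM0 : (0:ℝ) < ((2*Real.pi/L)^2) * ((Mx k:ℝ))^2 := by positivity
    have hκ2 : (0:ℝ) < knorm L k^2 := lt_of_lt_of_le hcM0 hknorm2
    have hκ0 : knorm L k ≠ 0 := fun h => by rw [h] at hκ2; simp at hκ2
    have hbound1 : ‖rhoCoef L ψ k‖^2 / knorm L k^2 ≤ a / ((Mx k:ℝ))^2 := by
      calc ‖rhoCoef L ψ k‖^2 / knorm L k^2
            ≤ P^2 / (((2*Real.pi/L)^2) * ((Mx k:ℝ))^2) :=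
          div_le_div₀ (sq_nonneg P) (pow_le_pow_left₀ (norm_nonneg _) (hB1 k) 2) hcM0 hknorm2
        _ = a / ((Mx k:ℝ))^2 := by
            rw [hP2, hadef]
            field_simp
            ring
    have hbound2 : ‖rhoCoef L ψ k‖^2 / knorm L k^2 ≤ (b/((Mx k:ℝ))^2) / ((Mx k:ℝ))^2 := by
      have hfq : ‖rhoCoef L ψ k‖^2 / knorm L k^2
          = (knorm L k * ‖rhoCoef L ψ k‖)^2 / (knorm L k^2)^2 := by
        field_simp
      rw [hfq]
      calc (knorm L k * ‖rhoCoef L ψ k‖)^2 / (knorm L k^2)^2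
            ≤ (P * (2*Real.sqrt S))^2 / ((((2*Real.pi/L)^2) * ((Mx k:ℝ))^2)^2) :=
          div_le_div₀ (sq_nonneg _)
            (pow_le_pow_left₀ (mul_nonneg (knorm_nonneg hL0 k) (norm_nonneg _)) (hB2 k) 2)
            (by positivity) (pow_le_pow_left₀ hcM0.le hknorm2 2)
        _ = (b/((Mx k:ℝ))^2) / ((Mx k:ℝ))^2 := by
            rw [mul_pow, hP2, hbdef, mul_pow, ← hsq]
            field_simp
            ring
            rw [hsq, hsq]
    calc ‖rhoCoef L ψ k‖^2 / knorm L k^2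
        ≤ min (a / ((Mx k:ℝ))^2) ((b/((Mx k:ℝ))^2) / ((Mx k:ℝ))^2) := le_min hbound1 hbound2
      _ = min a (b/((Mx k:ℝ))^2) / ((Mx k:ℝ))^2 := by
          rw [min_div_div_right (sq_nonneg ((Mx k:ℝ)))]
  -- ENNReal assembly
  set f : Lat3 → ℝ := fun k => if k = 0 then (0:ℝ) else ‖rhoCoef L ψ k‖^2 / knorm L k^2
    with hfdef
  have hWf : WL L ψ = ∑' k, f k := rfl
  clear_value f
  have hfnn : ∀ k, 0 ≤ f k := by
    intro k
    rw [hfdef]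
    dsimp only
    split
    · exact le_rfl
    · positivity
  set N : ℕ := ⌈L * Real.sqrt S⌉₊ with hNdef
  have hN : 1 ≤ N := by
    rw [hNdef]
    exact Nat.one_le_iff_ne_zero.mpr (Nat.pos_iff_ne_zero.mp (Nat.ceil_pos.mpr (by positivity)))
  have hN_lb : L * Real.sqrt S ≤ (N:ℝ) := Nat.le_ceil _
  have hN_ub : (N:ℝ) ≤ L * Real.sqrt S + 1 := (Nat.ceil_lt_add_one (by positivity)).le
  have hNpos : (0:ℝ) < N := lt_of_lt_of_le (by positivity) hN_lb
  clear_value N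
  set φ : ℕ → ENNReal := fun m => ENNReal.ofReal (min a (b/((m:ℝ))^2) / ((m:ℝ))^2) with hφdef
  clear_value φ
  have hkey : ENNReal.ofReal (WL L ψ) ≤ ENNReal.ofReal (27*(2*N*a + 2*(b/N))) := by
    calc ENNReal.ofReal (WL L ψ) = ∑' k : Lat3, ENNReal.ofReal (f k) := by
          rw [hWf]
          exact ENNReal.ofReal_tsum_of_nonneg hfnn h5
      _ ≤ ∑' k : Lat3, (if k = 0 then 0 else φ (Mx k)) := by
          refine ENNReal.tsum_le_tsum fun k => ?_
          rcases eq_or_ne k 0 with h|h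
          · subst h
            rw [if_pos rfl, hfdef]
            simp
          · rw [if_neg h, hfdef, hφdef]
            dsimp only
            rw [if_neg h]
            exact ENNReal.ofReal_le_ofReal (hfk k h)
      _ ≤ 27 * ∑' n : ℤ, (if n = 0 then 0 else ((n.natAbs : ENNReal))^2 * φ n.natAbs) :=
          lat3_count φ
      _ = 27 * ∑' n : ℤ,
            (if n = 0 then 0 else ENNReal.ofReal (min a (b / ((n.natAbs:ℝ))^2))) := by
          refine congrArg _ (tsum_congr fun n => ?_)
          rcases eq_or_ne n 0 with h|h
          · rw [if_pos h, if_pos h]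
          · rw [if_neg h, if_neg h, hφdef]
            have hm1 : 1 ≤ n.natAbs := by omega
            have hmR : ((n.natAbs:ℝ))^2 ≠ 0 := by
              have : (1:ℝ) ≤ (n.natAbs:ℝ) := by exact_mod_cast hm1
              positivity
            rw [show ((n.natAbs : ENNReal)) = ENNReal.ofReal ((n.natAbs:ℝ)) from
                (ENNReal.ofReal_natCast n.natAbs).symm,
              ← ENNReal.ofReal_pow (by positivity),
              ← ENNReal.ofReal_mul (by positivity)]
            rw [mul_div_cancel₀ _ hmR]
      _ ≤ 27 * (ENNReal.ofReal (2*N*a) + 2 * ENNReal.ofReal (b/N)) :=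
          mul_le_mul' le_rfl (int_sum_min_le a b ha hb N hN)
      _ = ENNReal.ofReal (27*(2*N*a + 2*(b/N))) := by
          rw [show (2:ENNReal) * ENNReal.ofReal (b/N) = ENNReal.ofReal (2*(b/N)) by
              rw [ENNReal.ofReal_mul (by norm_num : (0:ℝ) ≤ 2)]
              norm_num,
            ← ENNReal.ofReal_add (by positivity) (by positivity),
            show (27:ENNReal) = ENNReal.ofReal (27:ℝ) by norm_num,
            ← ENNReal.ofReal_mul (by norm_num : (0:ℝ) ≤ 27)]
  have hWreal : WL L ψ ≤ 27*(2*N*a + 2*(b/N)) :=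
    (ENNReal.ofReal_le_ofReal_iff (by positivity)).mp hkey
  -- final numeric estimates
  have e1 : 2*(N:ℝ)*a ≤ Real.sqrt S/(2*Real.pi^2) + 1/(2*Real.pi^2*L₀) := by
    have e1a : 2*(N:ℝ)*a = (N:ℝ)/(2*Real.pi^2*L) := by
      rw [hadef]; field_simp; ring
    have e1b : (N:ℝ)/(2*Real.pi^2*L) ≤ (L*Real.sqrt S+1)/(2*Real.pi^2*L) := by
      gcongr
    have e1c : (L*Real.sqrt S+1)/(2*Real.pi^2*L) = Real.sqrt S/(2*Real.pi^2)
        + 1/(2*Real.pi^2*L) := by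
      field_simp
    have e1d : 1/(2*Real.pi^2*L) ≤ 1/(2*Real.pi^2*L₀) := by
      gcongr
    rw [e1a]
    calc (N:ℝ)/(2*Real.pi^2*L) ≤ (L*Real.sqrt S+1)/(2*Real.pi^2*L) := e1b
      _ = Real.sqrt S/(2*Real.pi^2) + 1/(2*Real.pi^2*L) := e1c
      _ ≤ Real.sqrt S/(2*Real.pi^2) + 1/(2*Real.pi^2*L₀) := by linarith
  have e2 : 2*(b/(N:ℝ)) ≤ Real.sqrt S/(2*Real.pi^4) := by
    have e2a : 2*(b/(N:ℝ)) ≤ 2*(b/(L*Real.sqrt S)) := by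
      gcongr
    have e2b : 2*(b/(L*Real.sqrt S)) = Real.sqrt S/(2*Real.pi^4) := by
      rw [hbdef]
      field_simp
      linear_combination (-4) * hsq
    linarith
  have hπ2 : (18:ℝ) ≤ 2*Real.pi^2 := by nlinarith
  have hπ4 : (162:ℝ) ≤ 2*Real.pi^4 := by nlinarith
  have g1 : Real.sqrt S/(2*Real.pi^2) ≤ Real.sqrt S/18 := by
    gcongr
  have g2 : Real.sqrt S/(2*Real.pi^4) ≤ Real.sqrt S/162 := by
    gcongr
  have g3 : 1/(2*Real.pi^2*L₀) ≤ 1/(18*L₀) := by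
    gcongr
  have gS : 2*Real.sqrt S ≤ S/2 + 2 := by nlinarith [sq_nonneg (Real.sqrt S - 2), hsq]
  have hinvL₀ : (0:ℝ) < 1/L₀ := by positivity
  have hW : WL L ψ ≤ T/2 + (3 + 2/L₀) := by
    have : 27*(2*(N:ℝ)*a + 2*(b/(N:ℝ))) ≤ T/2 + (3 + 2/L₀) := by
      have b1 : 2*(N:ℝ)*a ≤ Real.sqrt S/18 + 1/(18*L₀) := by linarith
      have b2 : 2*(b/(N:ℝ)) ≤ Real.sqrt S/162 := by linarith
      have b3 : 27*(Real.sqrt S/18 + 1/(18*L₀) + Real.sqrt S/162)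
          = (5/3)*Real.sqrt S + (3/2)*(1/L₀) := by ring
      have h18 : 1/(18*L₀) = (1/18)*(1/L₀) := by ring
      have h2L : 2/L₀ = 2*(1/L₀) := by ring
      linarith [hsS1, gS, hinvL₀, b1, b2, hSdef.le, hSdef.ge, h18.le, h18.ge, h2L.le, h2L.ge]
    linarith [hWreal]
  have hEL : EL L ψ = T - WL L ψ := by rw [hTdef]; rfl
  refine ⟨hW, ?_, ?_⟩
  · rw [ge_iff_le, hEL]
    linarith
  · rw [ge_iff_le, hEL]
    linarith
end

section
/- For every ψ ∈ H¹(𝕋³_L) with L ≥ L₀, the density ρ_ψ = |ψ|² satisfies ‖ρ_ψ‖_{Ḣ^{1/8}(𝕋³_L)} ≲ ‖ψ‖²_{H¹(𝕋³_L)}, with an implicit constant independent of L. -/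
open scoped Real BigOperators ENNReal

/-- Squared fractional Sobolev seminorm `‖f‖²_{Ḣ^s(𝕋³_L)}`. -/
noncomputable def sobSq (L s : ℝ) (f : Lat3 → ℂ) : ℝ :=
  ∑' k : Lat3, if k = 0 then 0 else knorm L k ^ (2 * s) * ‖f k‖ ^ 2

/-- Squared `H¹(𝕋³_L)` norm. -/
noncomputable def H1nSq (L : ℝ) (ψ : Lat3 → ℂ) : ℝ :=
  ∑' k : Lat3, (1 + knorm L k ^ 2) * ‖ψ k‖ ^ 2

namespace RhoAux

open ENNReal

/-- Cauchy–Schwarz for `ℝ≥0∞`-valued tsums. -/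
lemma tsum_cs {ι : Type*} (f g : ι → ℝ≥0∞) :
    (∑' i, f i * g i) ^ 2 ≤ (∑' i, f i ^ 2) * (∑' i, g i ^ 2) := by
  letI : MeasurableSpace ι := ⊤
  haveI : MeasurableSingletonClass ι := ⟨fun _ => trivial⟩
  have hpq : Real.HolderConjugate 2 2 := Real.HolderConjugate.two_two
  have h := ENNReal.lintegral_mul_le_Lp_mul_Lq (f := f) (g := g)
      (MeasureTheory.Measure.count (α := ι)) hpq
      measurable_from_top.aemeasurable measurable_from_top.aemeasurable
  have hcast : ∀ x : ℝ≥0∞, x ^ (2:ℝ) = x ^ (2:ℕ) := by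
    intro x; rw [← ENNReal.rpow_natCast]; norm_num
  have h2 : (∑' i, f i * g i) ≤
      (∑' i, f i ^ (2:ℕ)) ^ ((1:ℝ)/2) * (∑' i, g i ^ (2:ℕ)) ^ ((1:ℝ)/2) := by
    simpa [MeasureTheory.lintegral_count, Pi.mul_apply, hcast] using h
  calc (∑' i, f i * g i) ^ 2
      ≤ ((∑' i, f i ^ (2:ℕ)) ^ ((1:ℝ)/2) * (∑' i, g i ^ (2:ℕ)) ^ ((1:ℝ)/2)) ^ 2 := by
        gcongr
    _ = (∑' i, f i ^ 2) * (∑' i, g i ^ 2) := by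
        rw [mul_pow, ← ENNReal.rpow_natCast (_ ^ ((1:ℝ)/2)) 2,
          ← ENNReal.rpow_natCast (_ ^ ((1:ℝ)/2)) 2, ← ENNReal.rpow_mul, ← ENNReal.rpow_mul]
        norm_num

/-- Subadditivity of `x ↦ x ^ p` for `0 ≤ p ≤ 1` on nonnegative reals. -/
lemma real_rpow_add_le {a b p : ℝ} (ha : 0 ≤ a) (hb : 0 ≤ b) (hp : 0 ≤ p) (hp1 : p ≤ 1) :
    (a + b) ^ p ≤ a ^ p + b ^ p := by
  have h := NNReal.rpow_add_le_add_rpow a.toNNReal b.toNNReal hp hp1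
  have := NNReal.coe_le_coe.2 h
  push_cast at this
  rwa [Real.coe_toNNReal _ ha, Real.coe_toNNReal _ hb] at this

lemma rpow_neg_antitone {x y p : ℝ} (hx : 0 < x) (hxy : x ≤ y) (hp : p ≤ 0) :
    y ^ p ≤ x ^ p :=
  Real.rpow_le_rpow_of_nonpos hx hxy hp

/-- triangle inequality for `knorm`. -/
lemma knorm_triangle (L : ℝ) (hL : 0 < L) (j k : Lat3) :
    knorm L k ≤ knorm L j + knorm L (j + k) := by
  have hc : 0 ≤ 2 * Real.pi / L := by positivity
  unfold knorm
  rw [← mul_add]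
  refine mul_le_mul_of_nonneg_left ?_ hc
  -- express via EuclideanSpace norms
  set v : Lat3 → EuclideanSpace ℝ (Fin 3) := fun m => WithLp.toLp 2 (fun i => (m i : ℝ)) with hv
  have hnorm : ∀ m : Lat3, Real.sqrt (∑ i, ((m i : ℝ)) ^ 2) = ‖v m‖ := by
    intro m
    rw [EuclideanSpace.norm_eq]
    congr 1
    refine Finset.sum_congr rfl fun i _ => ?_
    rw [Real.norm_eq_abs, sq_abs]
  rw [hnorm, hnorm, hnorm]
  have hvk : v k = v (j + k) - v j := by
    ext i
    simp [hv, Pi.add_apply]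
  rw [hvk]
  have := norm_sub_le (v (j + k)) (v j)
  linarith

lemma knorm_nonneg (L : ℝ) (hL : 0 < L) (k : Lat3) : 0 ≤ knorm L k := by
  unfold knorm
  have : 0 ≤ 2 * Real.pi / L := by positivity
  positivity

lemma knorm_sq (L : ℝ) (j : Lat3) :
    knorm L j ^ 2 = (2 * Real.pi / L) ^ 2 * (((j 0 : ℝ)) ^ 2 + ((j 1 : ℝ)) ^ 2 + ((j 2 : ℝ)) ^ 2) := by
  unfold knorm
  rw [mul_pow, Real.sq_sqrt (by positivity)]
  rw [Fin.sum_univ_three]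

/-- The key pointwise kernel estimate. -/
lemma kernel_bound {x y z : ℝ} (hx : 0 ≤ x) (hy : 0 ≤ y) (hz : 0 ≤ z) (hzxy : z ≤ x + y) :
    z ^ ((1:ℝ)/4) * ((1 + x ^ 2) * (1 + y ^ 2))⁻¹
      ≤ (1 + x ^ 2) ^ (-(7:ℝ)/4) + (1 + y ^ 2) ^ (-(7:ℝ)/4) := by
  set P := 1 + x ^ 2 with hP
  set Q := 1 + y ^ 2 with hQ
  have hP1 : (1:ℝ) ≤ P := by nlinarith [sq_nonneg x]
  have hQ1 : (1:ℝ) ≤ Q := by nlinarith [sq_nonneg y]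
  have hP0 : (0:ℝ) < P := by linarith
  have hQ0 : (0:ℝ) < Q := by linarith
  -- Step 1 : z^{1/4} ≤ P^{1/8} + Q^{1/8}
  have hquarter : ∀ t : ℝ, 0 ≤ t → t ^ ((1:ℝ)/4) ≤ (1 + t ^ 2) ^ ((1:ℝ)/8) := by
    intro t ht
    have h1 : t ^ ((1:ℝ)/4) = (t ^ 2) ^ ((1:ℝ)/8) := by
      rw [← Real.rpow_natCast t 2, ← Real.rpow_mul ht]
      norm_num
    rw [h1]
    exact Real.rpow_le_rpow (by positivity) (by nlinarith) (by norm_num)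
  have hstep1 : z ^ ((1:ℝ)/4) ≤ P ^ ((1:ℝ)/8) + Q ^ ((1:ℝ)/8) := by
    calc z ^ ((1:ℝ)/4) ≤ (x + y) ^ ((1:ℝ)/4) :=
          Real.rpow_le_rpow hz hzxy (by norm_num)
      _ ≤ x ^ ((1:ℝ)/4) + y ^ ((1:ℝ)/4) := real_rpow_add_le hx hy (by norm_num) (by norm_num)
      _ ≤ P ^ ((1:ℝ)/8) + Q ^ ((1:ℝ)/8) := add_le_add (hquarter x hx) (hquarter y hy)
  -- Step 2
  have key : ∀ A B : ℝ, 1 ≤ A → 1 ≤ B →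
      A ^ ((1:ℝ)/8) * ((A * B)⁻¹) ≤ (A ^ (-(7:ℝ)/4) + B ^ (-(7:ℝ)/4)) / 2 := by
    intro A B hA hB
    have hA0 : (0:ℝ) < A := by linarith
    have hB0 : (0:ℝ) < B := by linarith
    have e1 : A ^ ((1:ℝ)/8) * (A * B)⁻¹ = A ^ (-(7:ℝ)/8) * B ^ (-(1:ℝ)) := by
      rw [mul_inv, ← mul_assoc, ← Real.rpow_neg_one A, ← Real.rpow_add hA0,
        ← Real.rpow_neg_one B]
      norm_num
    rw [e1]
    have amgm : A ^ (-(7:ℝ)/8) * B ^ (-(1:ℝ)) ≤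
        ((A ^ (-(7:ℝ)/8)) ^ 2 + (B ^ (-(1:ℝ))) ^ 2) / 2 := by
      nlinarith [sq_nonneg (A ^ (-(7:ℝ)/8) - B ^ (-(1:ℝ)))]
    have e2 : (A ^ (-(7:ℝ)/8)) ^ 2 = A ^ (-(7:ℝ)/4) := by
      rw [← Real.rpow_natCast (A ^ (-(7:ℝ)/8)) 2, ← Real.rpow_mul hA0.le]
      norm_num
    have e3 : (B ^ (-(1:ℝ))) ^ 2 = B ^ (-(2:ℝ)) := by
      rw [← Real.rpow_natCast (B ^ (-(1:ℝ))) 2, ← Real.rpow_mul hB0.le]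
      norm_num
    have e4 : B ^ (-(2:ℝ)) ≤ B ^ (-(7:ℝ)/4) :=
      Real.rpow_le_rpow_of_exponent_le hB (by norm_num)
    calc A ^ (-(7:ℝ)/8) * B ^ (-(1:ℝ))
        ≤ ((A ^ (-(7:ℝ)/8)) ^ 2 + (B ^ (-(1:ℝ))) ^ 2) / 2 := amgm
      _ = (A ^ (-(7:ℝ)/4) + B ^ (-(2:ℝ))) / 2 := by rw [e2, e3]
      _ ≤ (A ^ (-(7:ℝ)/4) + B ^ (-(7:ℝ)/4)) / 2 := by linarith
  have hPQinv : (0:ℝ) ≤ ((P * Q))⁻¹ := by positivity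
  calc z ^ ((1:ℝ)/4) * (P * Q)⁻¹
      ≤ (P ^ ((1:ℝ)/8) + Q ^ ((1:ℝ)/8)) * (P * Q)⁻¹ :=
        mul_le_mul_of_nonneg_right hstep1 hPQinv
    _ = P ^ ((1:ℝ)/8) * (P * Q)⁻¹ + Q ^ ((1:ℝ)/8) * (Q * P)⁻¹ := by ring_nf
    _ ≤ (P ^ (-(7:ℝ)/4) + Q ^ (-(7:ℝ)/4)) / 2 + (Q ^ (-(7:ℝ)/4) + P ^ (-(7:ℝ)/4)) / 2 :=
        add_le_add (key P Q hP1 hQ1) (key Q P hQ1 hP1)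
    _ = P ^ (-(7:ℝ)/4) + Q ^ (-(7:ℝ)/4) := by ring

/-- Factorization of the 3-d weight by 1-d weights. -/
lemma prod_factor (c a b d : ℝ) :
    (1 + c ^ 2 * (a ^ 2 + b ^ 2 + d ^ 2)) ^ (-(7:ℝ)/4) ≤
      (1 + c ^ 2 * a ^ 2) ^ (-(7:ℝ)/12) *
        ((1 + c ^ 2 * b ^ 2) ^ (-(7:ℝ)/12) * (1 + c ^ 2 * d ^ 2) ^ (-(7:ℝ)/12)) := by
  set T := 1 + c ^ 2 * (a ^ 2 + b ^ 2 + d ^ 2) with hT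
  set P1 := 1 + c ^ 2 * a ^ 2 with hP1
  set P2 := 1 + c ^ 2 * b ^ 2 with hP2
  set P3 := 1 + c ^ 2 * d ^ 2 with hP3
  have h1 : (0:ℝ) < P1 := by positivity
  have h2 : (0:ℝ) < P2 := by positivity
  have h3 : (0:ℝ) < P3 := by positivity
  have hT0 : (0:ℝ) < T := by positivity
  have hP1T : P1 ≤ T := by nlinarith [sq_nonneg c, sq_nonneg b, sq_nonneg d]
  have hP2T : P2 ≤ T := by nlinarith [sq_nonneg c, sq_nonneg a, sq_nonneg d]
  have hP3T : P3 ≤ T := by nlinarith [sq_nonneg c, sq_nonneg a, sq_nonneg b]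
  have hprod : P1 * P2 * P3 ≤ T ^ 3 := by
    calc P1 * P2 * P3 ≤ T * T * T := by
          apply mul_le_mul (mul_le_mul hP1T hP2T h2.le hT0.le) hP3T h3.le (by positivity)
      _ = T ^ 3 := by ring
  have e1 : T ^ (-(7:ℝ)/4) = (T ^ (3:ℕ)) ^ (-(7:ℝ)/12) := by
    rw [← Real.rpow_natCast T 3, ← Real.rpow_mul hT0.le]
    norm_num
  rw [e1]
  calc (T ^ (3:ℕ)) ^ (-(7:ℝ)/12) ≤ (P1 * P2 * P3) ^ (-(7:ℝ)/12) :=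
        rpow_neg_antitone (by positivity) hprod (by norm_num)
    _ = P1 ^ (-(7:ℝ)/12) * (P2 ^ (-(7:ℝ)/12) * P3 ^ (-(7:ℝ)/12)) := by
        rw [Real.mul_rpow (by positivity) h3.le, Real.mul_rpow h1.le h2.le]
        ring

set_option maxHeartbeats 1000000 in
/-- Telescoping core inequality. -/
lemma core_ineq (x : ℝ) (hx : 1 ≤ x) :
    (x + 1) ^ (-(7:ℝ)/6) ≤ 6 * (x ^ (-(1:ℝ)/6) - (x + 1) ^ (-(1:ℝ)/6)) := by
  have hx0 : (0:ℝ) < x := by linarith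
  have hx10 : (0:ℝ) < x + 1 := by linarith
  set u := x ^ ((1:ℝ)/6) with hu
  set v := (x + 1) ^ ((1:ℝ)/6) with hvdef
  have hu1 : (1:ℝ) ≤ u := Real.one_le_rpow hx (by norm_num)
  have huv : u ≤ v := Real.rpow_le_rpow hx0.le (by linarith) (by norm_num)
  have hu0 : (0:ℝ) < u := by linarith
  have hv0 : (0:ℝ) < v := by linarith
  have hu6 : u ^ (6:ℕ) = x := by
    rw [hu, ← Real.rpow_natCast (x ^ ((1:ℝ)/6)) 6, ← Real.rpow_mul hx0.le]
    norm_num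
  have hv6 : v ^ (6:ℕ) = x + 1 := by
    rw [hvdef, ← Real.rpow_natCast ((x+1) ^ ((1:ℝ)/6)) 6, ← Real.rpow_mul hx10.le]
    norm_num
  have hxinv : x ^ (-(1:ℝ)/6) = u⁻¹ := by
    rw [hu, ← Real.rpow_neg_one (x ^ ((1:ℝ)/6)), ← Real.rpow_mul hx0.le]
    norm_num
  have hvinv : (x + 1) ^ (-(1:ℝ)/6) = v⁻¹ := by
    rw [hvdef, ← Real.rpow_neg_one ((x+1) ^ ((1:ℝ)/6)), ← Real.rpow_mul hx10.le]
    norm_num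
  have h7 : (x + 1) ^ (-(7:ℝ)/6) = (v ^ (7:ℕ))⁻¹ := by
    rw [hvdef, ← Real.rpow_natCast ((x+1) ^ ((1:ℝ)/6)) 7, ← Real.rpow_mul hx10.le,
      ← Real.rpow_neg hx10.le]
    norm_num
  rw [h7, hxinv, hvinv]
  -- factor identity
  have hfact : (v - u) * (v^5 + v^4*u + v^3*u^2 + v^2*u^3 + v*u^4 + u^5) = 1 := by
    have h6 : v ^ (6:ℕ) - u ^ (6:ℕ) = 1 := by rw [hu6, hv6]; ring
    linear_combination h6
  have hS : v^5 + v^4*u + v^3*u^2 + v^2*u^3 + v*u^4 + u^5 ≤ 6 * v^5 := by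
    have g2 : u^2 ≤ v^2 := pow_le_pow_left₀ hu0.le huv 2
    have g3 : u^3 ≤ v^3 := pow_le_pow_left₀ hu0.le huv 3
    have g4 : u^4 ≤ v^4 := pow_le_pow_left₀ hu0.le huv 4
    have g5 : u^5 ≤ v^5 := pow_le_pow_left₀ hu0.le huv 5
    have h1 : v^4*u ≤ v^4*v := mul_le_mul_of_nonneg_left huv (by positivity)
    have h2 : v^3*u^2 ≤ v^3*v^2 := mul_le_mul_of_nonneg_left g2 (by positivity)
    have h3 : v^2*u^3 ≤ v^2*v^3 := mul_le_mul_of_nonneg_left g3 (by positivity)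
    have h4 : v*u^4 ≤ v*v^4 := mul_le_mul_of_nonneg_left g4 hv0.le
    nlinarith [h1, h2, h3, h4, g5]
  have hvu0 : 0 ≤ v - u := by linarith
  have hvu : 1 ≤ (v - u) * (6 * v^5) := by
    calc (1:ℝ) = (v - u) * (v^5 + v^4*u + v^3*u^2 + v^2*u^3 + v*u^4 + u^5) := hfact.symm
      _ ≤ (v - u) * (6 * v^5) := by
          apply mul_le_mul_of_nonneg_left hS hvu0
  -- final: (v^7)⁻¹ ≤ 6 (u⁻¹ - v⁻¹)
  have hsub : u⁻¹ - v⁻¹ = (v - u) / (u * v) := by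
    field_simp
  have hgoal : u * v ≤ 6 * (v - u) * v ^ 7 := by
    have huv2 : u * v ≤ v ^ 2 := by nlinarith
    have h2 : v ^ 2 * 1 ≤ v ^ 2 * ((v - u) * (6 * v ^ 5)) :=
      mul_le_mul_of_nonneg_left hvu (by positivity)
    nlinarith [h2]
  rw [hsub, ← mul_div_assoc, inv_eq_one_div, div_le_div_iff₀ (by positivity) (by positivity)]
  nlinarith [hgoal]

/-- Tail estimate for `∑ n^{-7/6}`. -/
lemma tail_summable (K : ℕ) :
    Summable (fun n : ℕ => if n < K then (0:ℝ) else (n:ℝ) ^ (-(7:ℝ)/6)) := by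
  apply Summable.of_nonneg_of_le (fun n => by positivity)
    (fun n => ?_) (Real.summable_nat_rpow.mpr (by norm_num : (-(7:ℝ)/6) < -1))
  by_cases h : n < K
  · simp [h]
    positivity
  · simp [h]

lemma tail_bound (K : ℕ) (hK : 2 ≤ K) :
    ∑' n : ℕ, (if n < K then (0:ℝ) else (n:ℝ) ^ (-(7:ℝ)/6))
      ≤ 6 * ((K:ℝ) - 1) ^ (-(1:ℝ)/6) := by
  apply Summable.tsum_le_of_sum_le (tail_summable K)
  intro s
  classical
  set f : ℕ → ℝ := fun n => if n < K then (0:ℝ) else (n:ℝ) ^ (-(7:ℝ)/6) with hf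
  set N := max (s.sup id + 1) K with hN
  have hsub : s.filter (fun n => ¬ n < K) ⊆ Finset.Ico K N := by
    intro n hn
    rw [Finset.mem_filter] at hn
    rw [Finset.mem_Ico]
    constructor
    · omega
    · have : n ≤ s.sup id := Finset.le_sup (f := id) hn.1
      omega
  have h1 : ∑ n ∈ s, f n = ∑ n ∈ s.filter (fun n => ¬ n < K), (n:ℝ) ^ (-(7:ℝ)/6) := by
    rw [← Finset.sum_filter_add_sum_filter_not s (fun n => n < K) f]
    have : ∑ n ∈ s.filter (fun n => n < K), f n = 0 := by
      apply Finset.sum_eq_zero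
      intro n hn
      rw [Finset.mem_filter] at hn
      simp [hf, hn.2]
    rw [this, zero_add]
    apply Finset.sum_congr rfl
    intro n hn
    rw [Finset.mem_filter] at hn
    simp [hf, hn.2]
  rw [h1]
  have h2 : ∑ n ∈ s.filter (fun n => ¬ n < K), (n:ℝ) ^ (-(7:ℝ)/6)
      ≤ ∑ n ∈ Finset.Ico K N, (n:ℝ) ^ (-(7:ℝ)/6) := by
    apply Finset.sum_le_sum_of_subset_of_nonneg hsub
    intro n _ _
    positivity
  have h3 : ∑ n ∈ Finset.Ico K N, (n:ℝ) ^ (-(7:ℝ)/6)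
      ≤ ∑ n ∈ Finset.Ico K N, 6 * (((n:ℝ) - 1) ^ (-(1:ℝ)/6) - (n:ℝ) ^ (-(1:ℝ)/6)) := by
    apply Finset.sum_le_sum
    intro n hn
    rw [Finset.mem_Ico] at hn
    have hn2 : 2 ≤ n := le_trans hK hn.1
    have hx : (1:ℝ) ≤ (n:ℝ) - 1 := by
      have : (2:ℝ) ≤ (n:ℝ) := by exact_mod_cast hn2
      linarith
    have := core_ineq ((n:ℝ) - 1) hx
    have he : (n:ℝ) - 1 + 1 = (n:ℝ) := by ring
    rw [he] at this
    exact this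
  have h4 : ∑ n ∈ Finset.Ico K N, (((n:ℝ) - 1) ^ (-(1:ℝ)/6) - (n:ℝ) ^ (-(1:ℝ)/6))
      ≤ ((K:ℝ) - 1) ^ (-(1:ℝ)/6) := by
    rw [Finset.sum_Ico_eq_sum_range]
    set F : ℕ → ℝ := fun i => ((K:ℝ) - 1 + i) ^ (-(1:ℝ)/6) with hF
    have heq : ∀ i ∈ Finset.range (N - K),
        ((((K + i : ℕ)):ℝ) - 1) ^ (-(1:ℝ)/6) - (((K + i : ℕ)):ℝ) ^ (-(1:ℝ)/6)
          = F i - F (i + 1) := by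
      intro i _
      simp only [hF]
      push_cast
      ring_nf
    rw [Finset.sum_congr rfl heq, Finset.sum_range_sub' F]
    have hF0 : F 0 = ((K:ℝ) - 1) ^ (-(1:ℝ)/6) := by simp [hF]
    have hFn : 0 ≤ F (N - K) := by
      apply Real.rpow_nonneg
      have h2K : (2:ℝ) ≤ (K:ℝ) := by exact_mod_cast hK
      have hc : (0:ℝ) ≤ ((N - K : ℕ) : ℝ) := Nat.cast_nonneg _
      linarith
    rw [hF0]
    linarith
  calc ∑ n ∈ s.filter (fun n => ¬ n < K), (n:ℝ) ^ (-(7:ℝ)/6)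
      ≤ ∑ n ∈ Finset.Ico K N, (n:ℝ) ^ (-(7:ℝ)/6) := h2
    _ ≤ ∑ n ∈ Finset.Ico K N, 6 * (((n:ℝ) - 1) ^ (-(1:ℝ)/6) - (n:ℝ) ^ (-(1:ℝ)/6)) := h3
    _ = 6 * ∑ n ∈ Finset.Ico K N, (((n:ℝ) - 1) ^ (-(1:ℝ)/6) - (n:ℝ) ^ (-(1:ℝ)/6)) := by
        rw [Finset.mul_sum]
    _ ≤ 6 * (((K:ℝ) - 1) ^ (-(1:ℝ)/6)) := by
        have := h4
        linarith

/-- Explicit equivalence `Lat3 ≃ ℤ × ℤ × ℤ`. -/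
def e3 : Lat3 ≃ ℤ × ℤ × ℤ where
  toFun j := (j 0, j 1, j 2)
  invFun p := ![p.1, p.2.1, p.2.2]
  left_inv j := by
    funext i
    fin_cases i <;> rfl
  right_inv p := rfl

/-- One-dimensional lattice sum bound. -/
lemma one_dim {c cmax : ℝ} (hc : 0 < c) (hcc : c ≤ cmax) :
    ∑' n : ℤ, ENNReal.ofReal ((1 + c ^ 2 * (n:ℝ) ^ 2) ^ (-(7:ℝ)/12))
      ≤ ENNReal.ofReal ((14 + 7 * cmax) / c) := by
  classical
  set K : ℕ := ⌈1/c⌉₊ + 2 with hKdef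
  have hK2 : 2 ≤ K := by omega
  have hceil : 1/c ≤ (⌈1/c⌉₊ : ℝ) := Nat.le_ceil _
  have hceil2 : (⌈1/c⌉₊ : ℝ) ≤ 1/c + 1 := by
    have := Nat.ceil_lt_add_one (by positivity : (0:ℝ) ≤ 1/c)
    linarith
  have hKc : 1/c ≤ (K:ℝ) - 1 := by
    rw [hKdef]; push_cast; linarith
  have hK1 : (1:ℝ) ≤ (K:ℝ) - 1 := by
    have : (2:ℝ) ≤ (K:ℝ) := by exact_mod_cast hK2
    linarith
  have hKle : (K:ℝ) ≤ 1/c + 3 := by rw [hKdef]; push_cast; linarith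
  set g : ℤ → ℝ≥0∞ := fun n => ENNReal.ofReal ((1 + c ^ 2 * (n:ℝ) ^ 2) ^ (-(7:ℝ)/12)) with hg
  set h1 : ℤ → ℝ≥0∞ := fun n => if n.natAbs < K then 1 else 0 with hh1
  set h2 : ℤ → ℝ≥0∞ := fun n =>
    if n.natAbs < K then 0 else ENNReal.ofReal ((c * (n.natAbs : ℝ)) ^ (-(7:ℝ)/6)) with hh2
  have hpoint : ∀ n : ℤ, g n ≤ h1 n + h2 n := by
    intro n
    by_cases h : n.natAbs < K
    · simp only [hg, hh1, hh2, if_pos h, add_zero]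
      have hb : (1 + c ^ 2 * (n:ℝ) ^ 2) ^ (-(7:ℝ)/12) ≤ 1 := by
        apply Real.rpow_le_one_of_one_le_of_nonpos
          (by nlinarith [sq_nonneg ((n:ℝ)), sq_nonneg c]) (by norm_num)
      calc ENNReal.ofReal ((1 + c ^ 2 * (n:ℝ) ^ 2) ^ (-(7:ℝ)/12))
          ≤ ENNReal.ofReal 1 := ENNReal.ofReal_le_ofReal hb
        _ = 1 := ENNReal.ofReal_one
    · simp only [hg, hh1, hh2, if_neg h, zero_add]
      apply ENNReal.ofReal_le_ofReal
      have hKA : K ≤ n.natAbs := Nat.le_of_not_lt h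
      have hA0 : (0:ℝ) < (n.natAbs : ℝ) := by
        have : 0 < n.natAbs := by omega
        exact_mod_cast this
      have habs : ((n.natAbs : ℝ)) ^ 2 = ((n : ℝ)) ^ 2 := by
        rw [Nat.cast_natAbs, Int.cast_abs, sq_abs]
      have hb : (c * (n.natAbs:ℝ)) ^ 2 ≤ 1 + c ^ 2 * (n:ℝ) ^ 2 := by
        rw [mul_pow, habs]
        linarith
      have hcA : (0:ℝ) < c * (n.natAbs:ℝ) := by positivity
      calc (1 + c ^ 2 * (n:ℝ) ^ 2) ^ (-(7:ℝ)/12)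
          ≤ ((c * (n.natAbs:ℝ)) ^ 2) ^ (-(7:ℝ)/12) :=
            rpow_neg_antitone (by positivity) hb (by norm_num)
        _ = (c * (n.natAbs:ℝ)) ^ (-(7:ℝ)/6) := by
            rw [← Real.rpow_natCast (c * (n.natAbs:ℝ)) 2, ← Real.rpow_mul hcA.le]
            norm_num
  have hsplit : ∑' n : ℤ, g n ≤ (∑' n : ℤ, h1 n) + ∑' n : ℤ, h2 n := by
    calc ∑' n : ℤ, g n ≤ ∑' n : ℤ, (h1 n + h2 n) := ENNReal.tsum_le_tsum hpoint
      _ = _ := ENNReal.tsum_add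
  -- bound for h1
  have hs1 : ∑' n : ℤ, h1 n ≤ ENNReal.ofReal (2 * (K:ℝ) + 1) := by
    have hvanish : ∀ n ∉ Finset.Icc (-(K:ℤ)) (K:ℤ), h1 n = 0 := by
      intro n hn
      rw [Finset.mem_Icc] at hn
      have : ¬ n.natAbs < K := by omega
      simp [hh1, this]
    rw [tsum_eq_sum hvanish]
    calc ∑ n ∈ Finset.Icc (-(K:ℤ)) (K:ℤ), h1 n
        ≤ ∑ _n ∈ Finset.Icc (-(K:ℤ)) (K:ℤ), 1 := by
          apply Finset.sum_le_sum
          intro n _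
          rw [hh1]
          by_cases h : n.natAbs < K <;> simp [h]
      _ = ((Finset.Icc (-(K:ℤ)) (K:ℤ)).card : ℝ≥0∞) := by
          rw [Finset.sum_const, nsmul_eq_mul, mul_one]
      _ = ((2*K+1 : ℕ) : ℝ≥0∞) := by
          rw [Int.card_Icc]
          congr 1
          omega
      _ = ENNReal.ofReal ((2*K+1 : ℕ) : ℝ) := by rw [ENNReal.ofReal_natCast]
      _ ≤ ENNReal.ofReal (2 * (K:ℝ) + 1) := by
          apply ENNReal.ofReal_le_ofReal
          push_cast
          linarith
  -- tail function over ℕ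
  set tailF : ℕ → ℝ≥0∞ := fun m =>
    if m < K then 0 else ENNReal.ofReal ((c * (m:ℝ)) ^ (-(7:ℝ)/6)) with htailF
  have htail : ∑' m : ℕ, tailF m ≤ ENNReal.ofReal (6 / c) := by
    have heq : ∀ m : ℕ, tailF m = ENNReal.ofReal (c ^ (-(7:ℝ)/6)) *
        ENNReal.ofReal (if m < K then (0:ℝ) else (m:ℝ) ^ (-(7:ℝ)/6)) := by
      intro m
      by_cases h : m < K
      · simp [htailF, h]
      · rw [htailF]
        simp only [if_neg h]
        rw [← ENNReal.ofReal_mul (by positivity)]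
        congr 1
        rw [Real.mul_rpow hc.le (Nat.cast_nonneg m)]
    calc ∑' m : ℕ, tailF m
        = ENNReal.ofReal (c ^ (-(7:ℝ)/6)) *
            ∑' m : ℕ, ENNReal.ofReal (if m < K then (0:ℝ) else (m:ℝ) ^ (-(7:ℝ)/6)) := by
          rw [← ENNReal.tsum_mul_left]
          exact tsum_congr heq
      _ = ENNReal.ofReal (c ^ (-(7:ℝ)/6)) *
            ENNReal.ofReal (∑' m : ℕ, (if m < K then (0:ℝ) else (m:ℝ) ^ (-(7:ℝ)/6))) := by
          rw [ENNReal.ofReal_tsum_of_nonneg (fun m => by positivity) (tail_summable K)]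
      _ ≤ ENNReal.ofReal (c ^ (-(7:ℝ)/6)) * ENNReal.ofReal (6 * ((K:ℝ) - 1) ^ (-(1:ℝ)/6)) := by
          apply mul_le_mul_right
          exact ENNReal.ofReal_le_ofReal (tail_bound K hK2)
      _ ≤ ENNReal.ofReal (6 / c) := by
          rw [← ENNReal.ofReal_mul (by positivity)]
          apply ENNReal.ofReal_le_ofReal
          have hK1c : ((K:ℝ) - 1) ^ (-(1:ℝ)/6) ≤ c ^ ((1:ℝ)/6) := by
            have h1 : ((K:ℝ) - 1) ^ (-(1:ℝ)/6) ≤ (1/c) ^ (-(1:ℝ)/6) :=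
              rpow_neg_antitone (by positivity) hKc (by norm_num)
            have h2 : (1/c) ^ (-(1:ℝ)/6) = c ^ ((1:ℝ)/6) := by
              rw [one_div, ← Real.rpow_neg_one c, ← Real.rpow_mul hc.le]
              norm_num
            rw [h2] at h1
            exact h1
          calc c ^ (-(7:ℝ)/6) * (6 * ((K:ℝ) - 1) ^ (-(1:ℝ)/6))
              ≤ c ^ (-(7:ℝ)/6) * (6 * c ^ ((1:ℝ)/6)) := by
                apply mul_le_mul_of_nonneg_left _ (by positivity)
                apply mul_le_mul_of_nonneg_left hK1c (by norm_num)
            _ = 6 * (c ^ (-(7:ℝ)/6) * c ^ ((1:ℝ)/6)) := by ring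
            _ = 6 / c := by
                rw [← Real.rpow_add hc]
                norm_num [Real.rpow_neg_one]
                ring
  -- bound for h2
  have hs2 : ∑' n : ℤ, h2 n ≤ ENNReal.ofReal (6/c) + ENNReal.ofReal (6/c) := by
    rw [tsum_of_nat_of_neg_add_one ENNReal.summable ENNReal.summable]
    have e1 : ∀ m : ℕ, h2 (m:ℤ) = tailF m := by
      intro m
      simp [hh2, htailF, Int.natAbs_natCast]
    have e2 : ∀ m : ℕ, h2 (-((m:ℤ)+1)) = tailF (m+1) := by
      intro m
      have hna : ((-((m:ℤ)+1))).natAbs = m + 1 := by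
        omega
      simp only [hh2, htailF, hna]

    have hshift : ∑' m : ℕ, tailF (m+1) ≤ ∑' m : ℕ, tailF m :=
      ENNReal.tsum_comp_le_tsum_of_injective
        (fun a b hab => by simpa using hab : Function.Injective fun m : ℕ => m + 1) tailF
    calc (∑' m : ℕ, h2 (m:ℤ)) + ∑' m : ℕ, h2 (-((m:ℤ)+1))
        = (∑' m : ℕ, tailF m) + ∑' m : ℕ, tailF (m+1) := by
          rw [tsum_congr e1, tsum_congr e2]
      _ ≤ (∑' m : ℕ, tailF m) + ∑' m : ℕ, tailF m := add_le_add_right hshift _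
      _ ≤ ENNReal.ofReal (6/c) + ENNReal.ofReal (6/c) := add_le_add htail htail
  -- combine
  have hfinal : ENNReal.ofReal (2 * (K:ℝ) + 1) + (ENNReal.ofReal (6/c) + ENNReal.ofReal (6/c))
      ≤ ENNReal.ofReal ((14 + 7 * cmax) / c) := by
    rw [← ENNReal.ofReal_add (by positivity) (by positivity),
      ← ENNReal.ofReal_add (by positivity) (by positivity)]
    apply ENNReal.ofReal_le_ofReal
    have hc1 : (1:ℝ) ≤ cmax * (1/c) := by
      rw [mul_one_div, le_div_iff₀ hc]
      linarith
    have e1 : (6:ℝ)/c = 6 * (1/c) := by ring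
    have e2 : (14 + 7*cmax)/c = 14 * (1/c) + 7 * (cmax * (1/c)) := by ring
    rw [e1, e2]
    linarith
  calc ∑' n : ℤ, g n ≤ (∑' n : ℤ, h1 n) + ∑' n : ℤ, h2 n := hsplit
    _ ≤ ENNReal.ofReal (2 * (K:ℝ) + 1) + (ENNReal.ofReal (6/c) + ENNReal.ofReal (6/c)) :=
        add_le_add hs1 hs2
    _ ≤ ENNReal.ofReal ((14 + 7 * cmax) / c) := hfinal

end RhoAux

/-- For `ψ ∈ H¹(𝕋³_L)` with `L ≥ L₀`, `‖ρ_ψ‖_{Ḣ^{1/8}(𝕋³_L)} ≲ ‖ψ‖²_{H¹(𝕋³_L)}`,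
with implicit constant independent of `L`. -/
theorem rho_H_one_eighth_bound :
    ∀ L₀ : ℝ, 0 < L₀ → ∃ C : ℝ, 0 < C ∧ ∀ L : ℝ, L₀ ≤ L →
      ∀ ψ : Lat3 → ℂ,
        Summable (fun k : Lat3 => (1 + knorm L k ^ 2) * ‖ψ k‖ ^ 2) →
        (∀ k : Lat3, Summable (fun j : Lat3 => (starRingEnd ℂ) (ψ j) * ψ (j + k))) →
        Summable (fun k : Lat3 =>
          if k = 0 then (0:ℝ)
          else knorm L k ^ (2 * (1/8 : ℝ)) * ‖rhoCoef L ψ k‖ ^ 2) →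
        Real.sqrt (sobSq L (1/8) (rhoCoef L ψ)) ≤ C * H1nSq L ψ := by
  intro L₀ hL₀
  have hπ : (0:ℝ) < 2 * Real.pi := by positivity
  set cmax : ℝ := 2 * Real.pi / L₀ with hcmaxdef
  have hcmax0 : 0 < cmax := by positivity
  set Cσ : ℝ := (14 + 7 * cmax) / (2 * Real.pi) with hCσdef
  have hCσ0 : 0 < Cσ := by positivity
  refine ⟨Real.sqrt (2 * Cσ ^ 3), Real.sqrt_pos.2 (by positivity), ?_⟩
  intro L hL ψ h1sum h2sum h3sum
  have hL0 : 0 < L := lt_of_lt_of_le hL₀ hL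
  set c : ℝ := 2 * Real.pi / L with hcdef
  have hc0 : 0 < c := by positivity
  have hccmax : c ≤ cmax := by
    rw [hcdef, hcmaxdef]
    apply div_le_div_of_nonneg_left (by positivity) hL₀ hL
  -- basic objects
  set a : Lat3 → ℝ≥0∞ := fun j => ENNReal.ofReal ‖ψ j‖ with ha
  set W : Lat3 → ℝ≥0∞ := fun j => ENNReal.ofReal (1 + knorm L j ^ 2) with hW
  set F : Lat3 → ℝ≥0∞ := fun j => ENNReal.ofReal ((1 + knorm L j ^ 2) * ‖ψ j‖ ^ 2) with hF
  set H1 : ℝ := H1nSq L ψ with hH1def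
  have hknn : ∀ k, 0 ≤ knorm L k := RhoAux.knorm_nonneg L hL0
  have hw1 : ∀ j, (1:ℝ) ≤ 1 + knorm L j ^ 2 := fun j => by nlinarith [sq_nonneg (knorm L j)]
  have hw0 : ∀ j, (0:ℝ) < 1 + knorm L j ^ 2 := fun j => lt_of_lt_of_le one_pos (hw1 j)
  have hH1nonneg : 0 ≤ H1 := by
    rw [hH1def]
    unfold H1nSq
    apply tsum_nonneg
    intro k
    have := hw0 k
    positivity
  have hFsum : ∑' j, F j = ENNReal.ofReal H1 := by
    rw [hH1def]
    unfold H1nSq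
    rw [ENNReal.ofReal_tsum_of_nonneg (fun k => by positivity) h1sum]
  have hFW : ∀ j, F j = W j * a j ^ 2 := by
    intro j
    simp only [hF, hW, ha]
    rw [ENNReal.ofReal_mul (by positivity), ENNReal.ofReal_pow (norm_nonneg _)]
  have hWne0 : ∀ j, W j ≠ 0 := by
    intro j
    rw [hW]
    simp only [ne_eq, ENNReal.ofReal_eq_zero, not_le]
    exact hw0 j
  have hWnetop : ∀ j, W j ≠ ∞ := fun j => ENNReal.ofReal_ne_top
  set B : ℝ≥0∞ := ENNReal.ofReal ((14 + 7 * cmax) / c) with hB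
  set Wb : Lat3 → ℝ≥0∞ := fun j => ENNReal.ofReal ((1 + knorm L j ^ 2) ^ (-(7:ℝ)/4)) with hWb
  -- 3d lattice sum bound
  have hZb : ∑' j : Lat3, Wb j ≤ B ^ 3 := by
    set g : ℤ → ℝ≥0∞ := fun n => ENNReal.ofReal ((1 + c ^ 2 * (n:ℝ) ^ 2) ^ (-(7:ℝ)/12)) with hg
    have hpoint : ∀ j : Lat3, Wb j ≤ g (j 0) * (g (j 1) * g (j 2)) := by
      intro j
      have hsq := RhoAux.knorm_sq L j
      rw [← hcdef] at hsq
      simp only [hWb]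
      rw [hsq]
      calc ENNReal.ofReal ((1 + c^2*(((j 0:ℝ))^2+((j 1:ℝ))^2+((j 2:ℝ))^2)) ^ (-(7:ℝ)/4))
          ≤ ENNReal.ofReal ((1+c^2*((j 0:ℝ))^2) ^ (-(7:ℝ)/12) *
              ((1+c^2*((j 1:ℝ))^2) ^ (-(7:ℝ)/12) * (1+c^2*((j 2:ℝ))^2) ^ (-(7:ℝ)/12))) :=
            ENNReal.ofReal_le_ofReal
              (RhoAux.prod_factor c ((j 0 : ℝ)) ((j 1 : ℝ)) ((j 2 : ℝ)))
        _ = g (j 0) * (g (j 1) * g (j 2)) := by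
            rw [ENNReal.ofReal_mul (by positivity), ENNReal.ofReal_mul (by positivity)]
    have hfact : ∑' j : Lat3, (g (j 0) * (g (j 1) * g (j 2)))
        = (∑' n : ℤ, g n) * ((∑' n : ℤ, g n) * (∑' n : ℤ, g n)) := by
      have h0 : ∑' j : Lat3, (g (j 0) * (g (j 1) * g (j 2)))
          = ∑' p : ℤ × ℤ × ℤ, g p.1 * (g p.2.1 * g p.2.2) :=
        Equiv.tsum_eq RhoAux.e3 (fun p => g p.1 * (g p.2.1 * g p.2.2))
      rw [h0, ENNReal.tsum_prod']
      have inner : ∀ aa : ℤ, ∑' (q : ℤ × ℤ), g aa * (g q.1 * g q.2)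
          = g aa * ((∑' n : ℤ, g n) * (∑' n : ℤ, g n)) := by
        intro aa
        rw [ENNReal.tsum_mul_left]
        congr 1
        rw [ENNReal.tsum_prod']
        calc ∑' (b : ℤ), ∑' (d : ℤ), g b * g d
            = ∑' (b : ℤ), g b * ∑' (d : ℤ), g d := tsum_congr fun b => ENNReal.tsum_mul_left
          _ = _ := ENNReal.tsum_mul_right
      calc ∑' (aa : ℤ), ∑' (q : ℤ × ℤ), g aa * (g q.1 * g q.2)
          = ∑' (aa : ℤ), g aa * ((∑' n : ℤ, g n) * (∑' n : ℤ, g n)) := tsum_congr inner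
        _ = _ := ENNReal.tsum_mul_right
    calc ∑' j : Lat3, Wb j ≤ ∑' j : Lat3, (g (j 0) * (g (j 1) * g (j 2))) :=
          ENNReal.tsum_le_tsum hpoint
      _ = (∑' n : ℤ, g n) * ((∑' n : ℤ, g n) * (∑' n : ℤ, g n)) := hfact
      _ ≤ B * (B * B) :=
          mul_le_mul' (RhoAux.one_dim hc0 hccmax)
            (mul_le_mul' (RhoAux.one_dim hc0 hccmax) (RhoAux.one_dim hc0 hccmax))
      _ = B ^ 3 := by ring
  set Q : Lat3 → ℝ≥0∞ := fun k => ∑' j, F j * F (j + k) with hQ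
  -- the key estimate for each mode k
  have hkey : ∀ k : Lat3,
      ENNReal.ofReal (knorm L k ^ (2 * (1/8:ℝ)) * ‖rhoCoef L ψ k‖ ^ 2)
        ≤ ENNReal.ofReal (L ^ (-(3:ℝ))) * ((2 * B ^ 3) * Q k) := by
    intro k
    -- summability facts
    have hanorm : Summable (fun j : Lat3 => ‖ψ j‖ ^ 2) := by
      apply Summable.of_nonneg_of_le (fun j => sq_nonneg _) (fun j => ?_) h1sum
      nlinarith [sq_nonneg (knorm L j), sq_nonneg ‖ψ j‖]
    have hshift : Summable (fun j : Lat3 => ‖ψ (j + k)‖ ^ 2) := by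
      have := (Equiv.addRight k).summable_iff (f := fun j : Lat3 => ‖ψ j‖ ^ 2)
      exact this.2 hanorm
    have hprodsum : Summable (fun j : Lat3 => ‖ψ j‖ * ‖ψ (j + k)‖) := by
      apply Summable.of_nonneg_of_le (fun j => by positivity) (fun j => ?_)
        ((hanorm.add hshift).mul_left (1/2))
      nlinarith [sq_nonneg (‖ψ j‖ - ‖ψ (j+k)‖)]
    have hnormeq : (fun j : Lat3 => ‖(starRingEnd ℂ) (ψ j) * ψ (j + k)‖)
        = fun j => ‖ψ j‖ * ‖ψ (j + k)‖ := by
      funext j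
      rw [norm_mul, RCLike.norm_conj]
    have hT : ‖∑' j, (starRingEnd ℂ) (ψ j) * ψ (j + k)‖ ≤ ∑' j, ‖ψ j‖ * ‖ψ (j + k)‖ := by
      have h := norm_tsum_le_tsum_norm (f := fun j : Lat3 => (starRingEnd ℂ) (ψ j) * ψ (j + k))
        (by rw [hnormeq]; exact hprodsum)
      rwa [hnormeq] at h
    have hLpow : 0 < L ^ (-(3:ℝ)/2) := Real.rpow_pos_of_pos hL0 _
    have hrho : ‖rhoCoef L ψ k‖ ≤ L ^ (-(3:ℝ)/2) * ∑' j, ‖ψ j‖ * ‖ψ (j + k)‖ := by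
      unfold rhoCoef
      rw [norm_mul, Complex.norm_real, Real.norm_eq_abs, abs_of_pos hLpow]
      exact mul_le_mul_of_nonneg_left hT hLpow.le
    have hofP : ENNReal.ofReal (∑' j, ‖ψ j‖ * ‖ψ (j + k)‖) = ∑' j, a j * a (j + k) := by
      rw [ENNReal.ofReal_tsum_of_nonneg (fun j => by positivity) hprodsum]
      refine tsum_congr fun j => ?_
      rw [ENNReal.ofReal_mul (norm_nonneg _), ha]
    -- Cauchy–Schwarz
    set uu : Lat3 → ℝ≥0∞ := fun j => ((W j * W (j + k))⁻¹) ^ ((1:ℝ)/2) with huu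
    set vv : Lat3 → ℝ≥0∞ := fun j => ((W j * W (j + k)) ^ ((1:ℝ)/2)) * (a j * a (j + k)) with hvv
    have hx0 : ∀ j, W j * W (j + k) ≠ 0 := fun j => mul_ne_zero (hWne0 j) (hWne0 (j+k))
    have hxt : ∀ j, W j * W (j + k) ≠ ∞ := fun j =>
      ENNReal.mul_ne_top (hWnetop j) (hWnetop (j+k))
    have hr0 : ∀ j, (W j * W (j + k)) ^ ((1:ℝ)/2) ≠ 0 := by
      intro j
      simp [ENNReal.rpow_eq_zero_iff, hx0 j, hxt j]
    have hrt : ∀ j, (W j * W (j + k)) ^ ((1:ℝ)/2) ≠ ∞ :=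
      fun j => ENNReal.rpow_ne_top_of_nonneg (by norm_num) (hxt j)
    have huv : ∀ j, a j * a (j + k) = uu j * vv j := by
      intro j
      rw [huu, hvv]
      show a j * a (j + k) = ((W j * W (j + k))⁻¹) ^ ((1:ℝ)/2) *
        (((W j * W (j + k)) ^ ((1:ℝ)/2)) * (a j * a (j + k)))
      rw [ENNReal.inv_rpow, ← mul_assoc, ENNReal.inv_mul_cancel (hr0 j) (hrt j), one_mul]
    have hu2 : ∀ j, uu j ^ 2 = (W j * W (j + k))⁻¹ := by
      intro j
      rw [huu]
      show (((W j * W (j + k))⁻¹) ^ ((1:ℝ)/2)) ^ (2:ℕ) = (W j * W (j + k))⁻¹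
      rw [← ENNReal.rpow_natCast (((W j * W (j + k))⁻¹) ^ ((1:ℝ)/2)) 2, ← ENNReal.rpow_mul]
      norm_num
    have hv2 : ∀ j, vv j ^ 2 = F j * F (j + k) := by
      intro j
      rw [hvv]
      show (((W j * W (j + k)) ^ ((1:ℝ)/2)) * (a j * a (j + k))) ^ (2:ℕ) = F j * F (j + k)
      rw [mul_pow, ← ENNReal.rpow_natCast ((W j * W (j + k)) ^ ((1:ℝ)/2)) 2, ← ENNReal.rpow_mul]
      norm_num
      rw [hFW j, hFW (j+k)]
      ring
    have hcs : (∑' j, a j * a (j + k)) ^ 2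
        ≤ (∑' j, (W j * W (j + k))⁻¹) * Q k := by
      calc (∑' j, a j * a (j + k)) ^ 2 = (∑' j, uu j * vv j) ^ 2 := by
            rw [tsum_congr huv]
        _ ≤ (∑' j, uu j ^ 2) * (∑' j, vv j ^ 2) := RhoAux.tsum_cs uu vv
        _ = (∑' j, (W j * W (j + k))⁻¹) * Q k := by
            rw [tsum_congr hu2, tsum_congr hv2]
    -- kernel bound
    have hker : ENNReal.ofReal (knorm L k ^ ((1:ℝ)/4)) * (∑' j, (W j * W (j + k))⁻¹)
        ≤ 2 * ∑' j, Wb j := by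
      rw [← ENNReal.tsum_mul_left]
      have hpt : ∀ j, ENNReal.ofReal (knorm L k ^ ((1:ℝ)/4)) * (W j * W (j + k))⁻¹
          ≤ Wb j + Wb (j + k) := by
        intro j
        have hWmul : W j * W (j + k)
            = ENNReal.ofReal ((1 + knorm L j ^ 2) * (1 + knorm L (j+k) ^ 2)) := by
          rw [hW, ← ENNReal.ofReal_mul (hw0 j).le]
        rw [hWmul, ← ENNReal.ofReal_inv_of_pos (by positivity),
          ← ENNReal.ofReal_mul (Real.rpow_nonneg (hknn k) _)]
        have hkb := RhoAux.kernel_bound (hknn j) (hknn (j+k)) (hknn k)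
          (RhoAux.knorm_triangle L hL0 j k)
        calc ENNReal.ofReal (knorm L k ^ ((1:ℝ)/4) *
              ((1 + knorm L j ^ 2) * (1 + knorm L (j+k) ^ 2))⁻¹)
            ≤ ENNReal.ofReal ((1 + knorm L j ^ 2) ^ (-(7:ℝ)/4)
                + (1 + knorm L (j+k) ^ 2) ^ (-(7:ℝ)/4)) := ENNReal.ofReal_le_ofReal hkb
          _ = Wb j + Wb (j + k) := by
              rw [ENNReal.ofReal_add (by positivity) (by positivity), hWb]
      calc ∑' j, ENNReal.ofReal (knorm L k ^ ((1:ℝ)/4)) * (W j * W (j + k))⁻¹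
          ≤ ∑' j, (Wb j + Wb (j + k)) := ENNReal.tsum_le_tsum hpt
        _ = (∑' j, Wb j) + ∑' j, Wb (j + k) := ENNReal.tsum_add
        _ = (∑' j, Wb j) + ∑' j, Wb j := by
            congr 1
            exact (Equiv.addRight k).tsum_eq Wb
        _ = 2 * ∑' j, Wb j := (two_mul _).symm
    -- put everything together
    have hexp : knorm L k ^ (2 * (1/8:ℝ)) = knorm L k ^ ((1:ℝ)/4) := by norm_num
    have hL32 : (L ^ (-(3:ℝ)/2)) ^ (2:ℕ) = L ^ (-(3:ℝ)) := by
      rw [← Real.rpow_natCast (L ^ (-(3:ℝ)/2)) 2, ← Real.rpow_mul hL0.le]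
      norm_num
    calc ENNReal.ofReal (knorm L k ^ (2 * (1/8:ℝ)) * ‖rhoCoef L ψ k‖ ^ 2)
        = ENNReal.ofReal (knorm L k ^ ((1:ℝ)/4)) * ENNReal.ofReal ‖rhoCoef L ψ k‖ ^ 2 := by
          rw [hexp, ENNReal.ofReal_mul (Real.rpow_nonneg (hknn k) _),
            ENNReal.ofReal_pow (norm_nonneg _)]
      _ ≤ ENNReal.ofReal (knorm L k ^ ((1:ℝ)/4)) *
            (ENNReal.ofReal (L ^ (-(3:ℝ)/2)) * ∑' j, a j * a (j + k)) ^ 2 := by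
          apply mul_le_mul_right
          apply pow_le_pow_left' _ 2
          calc ENNReal.ofReal ‖rhoCoef L ψ k‖
              ≤ ENNReal.ofReal (L ^ (-(3:ℝ)/2) * ∑' j, ‖ψ j‖ * ‖ψ (j + k)‖) :=
                ENNReal.ofReal_le_ofReal hrho
            _ = ENNReal.ofReal (L ^ (-(3:ℝ)/2)) * ∑' j, a j * a (j + k) := by
                rw [ENNReal.ofReal_mul hLpow.le, hofP]
      _ = ENNReal.ofReal (L ^ (-(3:ℝ))) *
            (ENNReal.ofReal (knorm L k ^ ((1:ℝ)/4)) * (∑' j, a j * a (j + k)) ^ 2) := by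
          rw [mul_pow, ← ENNReal.ofReal_pow hLpow.le, hL32]
          ring
      _ ≤ ENNReal.ofReal (L ^ (-(3:ℝ))) *
            (ENNReal.ofReal (knorm L k ^ ((1:ℝ)/4)) *
              ((∑' j, (W j * W (j + k))⁻¹) * Q k)) := by
          apply mul_le_mul_right
          exact mul_le_mul_right hcs _
      _ ≤ ENNReal.ofReal (L ^ (-(3:ℝ))) * ((2 * B ^ 3) * Q k) := by
          apply mul_le_mul_right
          rw [← mul_assoc]
          apply mul_le_mul_left
          calc ENNReal.ofReal (knorm L k ^ ((1:ℝ)/4)) * (∑' j, (W j * W (j + k))⁻¹)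
              ≤ 2 * ∑' j, Wb j := hker
            _ ≤ 2 * B ^ 3 := mul_le_mul_right hZb 2
  -- summing over k
  have hsum_nonneg : ∀ k : Lat3, 0 ≤ (if k = 0 then (0:ℝ)
      else knorm L k ^ (2 * (1/8:ℝ)) * ‖rhoCoef L ψ k‖ ^ 2) := by
    intro k
    by_cases hk : k = 0
    · simp [hk]
    · rw [if_neg hk]
      have := hknn k
      positivity
  have hQsum : ∑' k, Q k = (ENNReal.ofReal H1) ^ 2 := by
    calc ∑' k, Q k = ∑' (k) (j), F j * F (j + k) := rfl
      _ = ∑' (j) (k), F j * F (j + k) := ENNReal.tsum_comm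
      _ = ∑' j, F j * ∑' k, F (j + k) := tsum_congr fun j => ENNReal.tsum_mul_left
      _ = ∑' j, F j * ∑' k, F k := by
          refine tsum_congr fun j => ?_
          congr 1
          exact (Equiv.addLeft j).tsum_eq F
      _ = (∑' k, F k) * (∑' k, F k) := ENNReal.tsum_mul_right
      _ = (ENNReal.ofReal H1) ^ 2 := by rw [hFsum]; ring
  have hE : ENNReal.ofReal (sobSq L (1/8) (rhoCoef L ψ))
      ≤ ENNReal.ofReal (2 * Cσ ^ 3 * H1 ^ 2) := by
    unfold sobSq
    rw [ENNReal.ofReal_tsum_of_nonneg hsum_nonneg h3sum]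
    calc ∑' k, ENNReal.ofReal (if k = 0 then (0:ℝ)
          else knorm L k ^ (2 * (1/8:ℝ)) * ‖rhoCoef L ψ k‖ ^ 2)
        ≤ ∑' k, ENNReal.ofReal (L ^ (-(3:ℝ))) * ((2 * B ^ 3) * Q k) := by
          apply ENNReal.tsum_le_tsum
          intro k
          by_cases hk : k = 0
          · simp [hk]
          · rw [if_neg hk]
            exact hkey k
      _ = ENNReal.ofReal (L ^ (-(3:ℝ))) * ((2 * B ^ 3) * ∑' k, Q k) := by
          rw [ENNReal.tsum_mul_left, ENNReal.tsum_mul_left]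
      _ = ENNReal.ofReal (L ^ (-(3:ℝ))) * ((2 * B ^ 3) * (ENNReal.ofReal H1) ^ 2) := by
          rw [hQsum]
      _ ≤ ENNReal.ofReal (2 * Cσ ^ 3 * H1 ^ 2) := by
          have hBeq : B = ENNReal.ofReal (Cσ * L) := by
            rw [hB, hCσdef, hcdef]
            congr 1
            field_simp
          have h2e : (2:ℝ≥0∞) = ENNReal.ofReal (2:ℝ) := by
            rw [ENNReal.ofReal_ofNat]
          rw [hBeq, ← ENNReal.ofReal_pow (by positivity), ← ENNReal.ofReal_pow hH1nonneg,
            h2e, ← ENNReal.ofReal_mul (by norm_num), ← ENNReal.ofReal_mul (by positivity),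
            ← ENNReal.ofReal_mul (by positivity)]
          apply ENNReal.ofReal_le_ofReal
          have hL3 : L ^ (-(3:ℝ)) * L ^ (3:ℕ) = 1 := by
            rw [← Real.rpow_natCast L 3, ← Real.rpow_add hL0]
            norm_num
          apply le_of_eq
          calc L ^ (-(3:ℝ)) * (2 * (Cσ * L) ^ 3 * H1 ^ 2)
              = (L ^ (-(3:ℝ)) * L ^ (3:ℕ)) * (2 * Cσ ^ 3 * H1 ^ 2) := by ring
            _ = 2 * Cσ ^ 3 * H1 ^ 2 := by rw [hL3]; ring
          
  have hsob_nonneg : 0 ≤ sobSq L (1/8) (rhoCoef L ψ) := by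
    unfold sobSq
    exact tsum_nonneg hsum_nonneg
  have hRHSnonneg : 0 ≤ 2 * Cσ ^ 3 * H1 ^ 2 := by positivity
  have hsob : sobSq L (1/8) (rhoCoef L ψ) ≤ 2 * Cσ ^ 3 * H1 ^ 2 := by
    rwa [ENNReal.ofReal_le_ofReal_iff hRHSnonneg] at hE
  calc Real.sqrt (sobSq L (1/8) (rhoCoef L ψ))
      ≤ Real.sqrt (2 * Cσ ^ 3 * H1 ^ 2) := Real.sqrt_le_sqrt hsob
    _ = Real.sqrt (2 * Cσ ^ 3) * H1 := by
        rw [Real.sqrt_mul (by positivity) (H1 ^ 2), Real.sqrt_sq hH1nonneg]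
    _ = Real.sqrt (2 * Cσ ^ 3) * H1nSq L ψ := by rw [hH1def]
end
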